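/- Let X = ⋃_{k≥1} (A_k ∪ B_{k+1}) ⊆ ℝ², where A_k = [k,∞) × {k} and B_k = {k} × [k−1,k], let d_e be the Euclidean metric on X and d the path metric on X. Then asdim(X,d) = 1 and asdim(X,d_e) = 2. -/

import Mathlib

open Metric Bornology Function Set

/-- A map between metric spaces is (coarsely) proper if preimages of bounded
sets are bounded. -/
def MetricallyProper {X Y : Type*} [MetricSpace X] [MetricSpace Y] (f : X → Y) : Prop :=
  ∀ B : Set Y, IsBounded B → IsBounded (f ⁻¹' B)

/-- A coarse map: proper, and uniformly bornologous. -/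
def CoarseMap {X Y : Type*} [MetricSpace X] [MetricSpace Y] (f : X → Y) : Prop :=
  MetricallyProper f ∧
    ∀ R > (0:ℝ), ∃ S > (0:ℝ), ∀ x x' : X, dist x x' ≤ R → dist (f x) (f x') ≤ S

/-- Coarsely surjective map. -/
def CoarselySurjective {X Y : Type*} [MetricSpace X] [MetricSpace Y] (f : X → Y) : Prop :=
  ∃ R > (0:ℝ), ∀ y : Y, ∃ x : X, dist y (f x) ≤ R

/-- `f` is coarsely `n`-to-1. -/
def CoarselyNTo1 {X Y : Type*} [MetricSpace X] [MetricSpace Y] (f : X → Y) (n : ℕ) : Prop :=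
  ∀ R > (0:ℝ), ∃ S > (0:ℝ), ∀ A : Set Y, (∀ y ∈ A, ∀ y' ∈ A, dist y y' ≤ R) →
    ∃ V : Fin n → Set X, (∀ i, ∀ x ∈ V i, ∀ x' ∈ V i, dist x x' ≤ S) ∧ f ⁻¹' A ⊆ ⋃ i, V i

/-- `f` is coarsely finite-to-1. -/
def CoarselyFiniteTo1 {X Y : Type*} [MetricSpace X] [MetricSpace Y] (f : X → Y) : Prop :=
  ∀ R > (0:ℝ), ∃ S > (0:ℝ), ∃ m : ℕ, ∀ A : Set Y, (∀ y ∈ A, ∀ y' ∈ A, dist y y' ≤ R) →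
    ∃ V : Fin m → Set X, (∀ i, ∀ x ∈ V i, ∀ x' ∈ V i, dist x x' ≤ S) ∧ f ⁻¹' A ⊆ ⋃ i, V i

/-- Two maps are close. -/
def Close {X Y : Type*} [MetricSpace X] [MetricSpace Y] (f g : X → Y) : Prop :=
  ∃ R > (0:ℝ), ∀ x : X, dist (f x) (g x) ≤ R

/-- `f` is a coarse equivalence. -/
def CoarseEquivalence {X Y : Type*} [MetricSpace X] [MetricSpace Y] (f : X → Y) : Prop :=
  CoarseMap f ∧ ∃ g : Y → X, CoarseMap g ∧ Close (f ∘ g) id ∧ Close (g ∘ f) id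

/-- `X` and `Y` are coarsely equivalent. -/
def CoarselyEquivalent (X Y : Type*) [MetricSpace X] [MetricSpace Y] : Prop :=
  ∃ f : X → Y, CoarseEquivalence f

/-- A family of subsets is uniformly bounded. -/
def UnifBounded {X : Type*} [MetricSpace X] (𝒰 : Set (Set X)) : Prop :=
  ∃ S : ℝ, ∀ U ∈ 𝒰, ∀ x ∈ U, ∀ y ∈ U, dist x y ≤ S

/-- A family of subsets is `R`-disjoint: distinct members lie at distance `> R`. -/
def RDisjointFam {X : Type*} [MetricSpace X] (𝒰 : Set (Set X)) (R : ℝ) : Prop :=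
  ∀ U ∈ 𝒰, ∀ V ∈ 𝒰, U ≠ V → ∀ x ∈ U, ∀ y ∈ V, R < dist x y

/-- `asdim X ≤ n`. -/
def ASDimLE (X : Type*) [MetricSpace X] (n : ℕ) : Prop :=
  ∀ R > (0:ℝ), ∃ 𝒰 : Fin (n + 1) → Set (Set X),
    (∀ i, UnifBounded (𝒰 i)) ∧ (∀ i, RDisjointFam (𝒰 i) R) ∧
      ∀ x : X, ∃ i, ∃ U ∈ 𝒰 i, x ∈ U

/-- The asymptotic dimension of `X`, valued in `ℕ∞`. -/
noncomputable def asdim (X : Type*) [MetricSpace X] : ℕ∞ :=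
  sInf {n : ℕ∞ | ∃ m : ℕ, n = (m : ℕ∞) ∧ ASDimLE X m}

/-- TI-increasing functions `[0,∞) → [0,∞)`. -/
def TIIncreasing (ρ : NNReal → NNReal) : Prop :=
  Monotone ρ ∧ Filter.Tendsto ρ Filter.atTop Filter.atTop

/-- The variable-radius neighborhood `N(A, ρ)` with respect to a basepoint `x₀`. -/
def GrowNbhd {X : Type*} [MetricSpace X] (x₀ : X) (A : Set X) (ρ : NNReal → NNReal) : Set X :=
  {x' | ∃ x ∈ A, nndist x' x ≤ ρ (nndist x x₀)}

/-- `f` is coarsely open (with respect to basepoints `x₀`, `y₀`). -/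
def CoarselyOpen {X Y : Type*} [MetricSpace X] [MetricSpace Y] (f : X → Y)
    (x₀ : X) (y₀ : Y) : Prop :=
  ∀ A : Set X, ¬ IsBounded A → ∀ ρ : NNReal → NNReal, TIIncreasing ρ →
    ∃ ρ' : NNReal → NNReal, TIIncreasing ρ' ∧
      GrowNbhd y₀ (f '' A) ρ' ⊆ f '' GrowNbhd x₀ A ρ

/-- `N(A, R)`, the closed `R`-neighborhood of `A`. -/
def NbhdR {X : Type*} [MetricSpace X] (A : Set X) (R : ℝ) : Set X :=
  {x | ∃ a ∈ A, dist x a ≤ R}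

/-- A finite collection of subsets is gradually disjoint. -/
def GraduallyDisjoint {X : Type*} [MetricSpace X] {k : ℕ} (A : Fin k → Set X) : Prop :=
  ∀ R > (0:ℝ), ∃ B : Set X, IsBounded B ∧
    ∀ i j, i ≠ j → Disjoint (NbhdR (A i) R \ B) (NbhdR (A j) R \ B)

/-- A finite collection of subsets diverges. -/
def Diverges {X : Type*} [MetricSpace X] {k : ℕ} (A : Fin k → Set X) : Prop :=
  ∀ R > (0:ℝ), IsBounded (⋂ i, NbhdR (A i) R)

/-- A countable collection of subsets is gradually disjoint: every finite
subcollection is. -/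
def GraduallyDisjointSeq {X : Type*} [MetricSpace X] (A : ℕ → Set X) : Prop :=
  ∀ s : Finset ℕ, ∀ R > (0:ℝ), ∃ B : Set X, IsBounded B ∧
    ∀ i ∈ s, ∀ j ∈ s, i ≠ j → Disjoint (NbhdR (A i) R \ B) (NbhdR (A j) R \ B)

/-- A countable collection of subsets diverges: some finite subcollection diverges. -/
def DivergesSeq {X : Type*} [MetricSpace X] (A : ℕ → Set X) : Prop :=
  ∃ s : Finset ℕ, ∀ R > (0:ℝ), IsBounded (⋂ i ∈ s, NbhdR (A i) R)

/-- A complex-valued function on a metric space is slowly oscillating. -/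
def SlowlyOscillating {X : Type*} [MetricSpace X] (φ : X → ℂ) : Prop :=
  ∀ R > (0:ℝ), ∀ ε > (0:ℝ), ∃ A : Set X, IsBounded A ∧
    ∀ x : X, ∀ p ∈ closedBall x R \ A, ∀ p' ∈ closedBall x R \ A, dist (φ p) (φ p') ≤ ε
/-- The horizontal ray `A_k = [k,∞) × {k}`, inside `ℂ ≅ ℝ²`. -/
def Aray (k : ℕ) : Set ℂ := {z | z.im = (k:ℝ) ∧ (k:ℝ) ≤ z.re}

/-- The vertical segment `B_k = {k} × [k-1,k]`, inside `ℂ ≅ ℝ²`. -/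
def Bseg (k : ℕ) : Set ℂ := {z | z.re = (k:ℝ) ∧ (k:ℝ) - 1 ≤ z.im ∧ z.im ≤ (k:ℝ)}

/-- The tree `X = ⋃_{k ≥ 1} (A_k ∪ B_{k+1}) ⊆ ℝ²`. -/
def Xtree : Set ℂ := ⋃ k ∈ {k : ℕ | 1 ≤ k}, (Aray k ∪ Bseg (k + 1))

/-- The Euclidean length of a path in `X ⊆ ℝ² = ℂ`, i.e. its total variation. -/
noncomputable def pathLength {p q : Xtree} (γ : Path p q) : ENNReal :=
  eVariationOn (fun t => ((γ t : Xtree) : ℂ)) Set.univ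

/-- The path metric on `X`: the infimum of the Euclidean lengths of continuous
paths in `X` joining two given points (`∞` if there is none). -/
noncomputable def treePathDist (p q : Xtree) : ENNReal :=
  ⨅ γ : Path p q, pathLength γ

/-- The ray `A_k`, as a subset of the tree `X` (with its Euclidean metric). -/
def ArayX (k : ℕ) : Set Xtree := Subtype.val ⁻¹' Aray k


/-! ### Auxiliary development -/

section AsdimBasics

variable {Z : Type*} [MetricSpace Z]

lemma ASDimLE_mono {m m' : ℕ} (h : ASDimLE Z m) (hm : m ≤ m') : ASDimLE Z m' := by
  intro R hR
  obtain ⟨𝒰, h1, h2, h3⟩ := h R hR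
  refine ⟨fun i => if hi : (i : ℕ) < m + 1 then 𝒰 ⟨i, hi⟩ else ∅, ?_, ?_, ?_⟩
  · intro i
    by_cases hi : (i : ℕ) < m + 1
    · simpa [hi] using h1 ⟨i, hi⟩
    · refine ⟨0, ?_⟩; simp [hi]
  · intro i
    by_cases hi : (i : ℕ) < m + 1
    · simpa [hi] using h2 ⟨i, hi⟩
    · intro U hU; simp [hi] at hU
  · intro x
    obtain ⟨i, U, hU, hx⟩ := h3 x
    refine ⟨⟨i, by omega⟩, U, ?_, hx⟩
    have hi : ((⟨(i : ℕ), by omega⟩ : Fin (m' + 1)) : ℕ) < m + 1 := i.isLt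
    simpa [hi] using hU

lemma asdim_eq_of (m : ℕ) (h : ASDimLE Z m) (h' : ∀ k : ℕ, ASDimLE Z k → m ≤ k) :
    asdim Z = m := by
  apply le_antisymm
  · exact sInf_le ⟨m, rfl, h⟩
  · refine le_sInf ?_
    rintro b ⟨k, rfl, hk⟩
    exact_mod_cast h' k hk

end AsdimBasics

section XUpper

/-- The coordinate `t` is at depth `≥ L/2` inside a tile of color `c` (tiles of
side `3L`, color-`c` tiles shifted by `cL`). -/
def GoodCoord (L : ℝ) (c : ℕ) (t : ℝ) : Prop :=
  ∃ i : ℤ, 3*L*i + c*L + L/2 ≤ t ∧ t ≤ 3*L*i + c*L + 5*L/2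

lemma goodCoord_unique_bad {L : ℝ} (hL : 0 < L) {t : ℝ} {c c' : ℕ} (hc : c < 3) (hc' : c' < 3)
    (h : ¬ GoodCoord L c t) (h' : ¬ GoodCoord L c' t) : c = c' := by
  have key : ∀ d : ℕ, ¬ GoodCoord L d t →
      ∃ i : ℤ, 3*L*i + d*L + 5*L/2 < t ∧ t < 3*L*i + d*L + 7*L/2 := by
    intro d hnd
    set i : ℤ := ⌊(t - d*L - L/2) / (3*L)⌋ with hidef
    have h3L : (0:ℝ) < 3*L := by linarith
    have hfl : 3*L*i ≤ t - d*L - L/2 := by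
      rw [hidef]
      calc 3*L*(⌊(t - d*L - L/2) / (3*L)⌋ : ℤ) ≤ 3*L*((t - d*L - L/2) / (3*L)) :=
            mul_le_mul_of_nonneg_left (Int.floor_le _) (le_of_lt h3L)
        _ = t - d*L - L/2 := by field_simp
    have hfu : t - d*L - L/2 < 3*L*((i:ℝ)+1) := by
      rw [hidef]
      calc t - d*L - L/2 = 3*L*((t - d*L - L/2) / (3*L)) := by field_simp
        _ < 3*L*((⌊(t - d*L - L/2) / (3*L)⌋ : ℝ)+1) := by
            refine mul_lt_mul_of_pos_left ?_ h3L
            exact Int.lt_floor_add_one _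
    refine ⟨i, ?_, by linarith⟩
    by_contra hcon
    push_neg at hcon
    exact hnd ⟨i, by linarith, hcon⟩
  obtain ⟨i, hi1, hi2⟩ := key c h
  obtain ⟨i', hi1', hi2'⟩ := key c' h'
  have he : (3*(i' - i) + ((c':ℤ) - c) : ℤ) = 0 := by
    have hcast : |((3*(i' - i) + ((c':ℤ) - c) : ℤ) : ℝ)| < 1 := by
      rw [abs_lt]
      constructor
      · push_cast
        nlinarith
      · push_cast
        nlinarith
    have habs : |(3*(i' - i) + ((c':ℤ) - c) : ℤ)| < 1 := by
      rw [← Int.cast_abs] at hcast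
      exact_mod_cast hcast
    rw [abs_lt] at habs
    omega
  omega

lemma exists_good_color {L : ℝ} (hL : 0 < L) (a b : ℝ) :
    ∃ c : ℕ, c < 3 ∧ GoodCoord L c a ∧ GoodCoord L c b := by
  by_contra h
  push_neg at h
  have h0 : ¬ GoodCoord L 0 a ∨ ¬ GoodCoord L 0 b := by
    rcases Classical.em (GoodCoord L 0 a) with ha | ha
    · exact Or.inr (h 0 (by norm_num) ha)
    · exact Or.inl ha
  have h1 : ¬ GoodCoord L 1 a ∨ ¬ GoodCoord L 1 b := by
    rcases Classical.em (GoodCoord L 1 a) with ha | ha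
    · exact Or.inr (h 1 (by norm_num) ha)
    · exact Or.inl ha
  have h2 : ¬ GoodCoord L 2 a ∨ ¬ GoodCoord L 2 b := by
    rcases Classical.em (GoodCoord L 2 a) with ha | ha
    · exact Or.inr (h 2 (by norm_num) ha)
    · exact Or.inl ha
  rcases h0 with g0 | g0 <;> rcases h1 with g1 | g1 <;> rcases h2 with g2 | g2
  all_goals first
    | exact absurd (goodCoord_unique_bad hL (by norm_num) (by norm_num) g0 g1) (by norm_num)
    | exact absurd (goodCoord_unique_bad hL (by norm_num) (by norm_num) g0 g2) (by norm_num)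
    | exact absurd (goodCoord_unique_bad hL (by norm_num) (by norm_num) g1 g2) (by norm_num)

lemma complex_dist_le (z w : ℂ) : dist z w ≤ |z.re - w.re| + |z.im - w.im| := by
  rw [Complex.dist_eq]
  simpa [Complex.sub_re, Complex.sub_im] using Complex.norm_le_abs_re_add_abs_im (z - w)

lemma complex_re_dist_le (z w : ℂ) : |z.re - w.re| ≤ dist z w := by
  rw [Complex.dist_eq]
  simpa [Complex.sub_re] using Complex.abs_re_le_norm (z - w)

lemma complex_im_dist_le (z w : ℂ) : |z.im - w.im| ≤ dist z w := by
  rw [Complex.dist_eq]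
  simpa [Complex.sub_im] using Complex.abs_im_le_norm (z - w)

lemma asdimLE_Xtree_two : ASDimLE Xtree 2 := by
  intro R hR
  set L : ℝ := R + 1 with hLdef
  have hL : 0 < L := by linarith
  refine ⟨fun c => {U | ∃ i j : ℤ, U = {z : Xtree |
      (3*L*i + (c:ℕ)*L + L/2 ≤ (z:ℂ).re ∧ (z:ℂ).re ≤ 3*L*i + (c:ℕ)*L + 5*L/2) ∧
      (3*L*j + (c:ℕ)*L + L/2 ≤ (z:ℂ).im ∧ (z:ℂ).im ≤ 3*L*j + (c:ℕ)*L + 5*L/2)}},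
    ?_, ?_, ?_⟩
  · intro c
    refine ⟨4*L, ?_⟩
    rintro U ⟨i, j, rfl⟩ x hx y hy
    obtain ⟨⟨hx1, hx2⟩, hx3, hx4⟩ := hx
    obtain ⟨⟨hy1, hy2⟩, hy3, hy4⟩ := hy
    rw [Subtype.dist_eq]
    refine le_trans (complex_dist_le _ _) ?_
    have e1 : |(x:ℂ).re - (y:ℂ).re| ≤ 2*L := by
      rw [abs_le]; constructor <;> linarith
    have e2 : |(x:ℂ).im - (y:ℂ).im| ≤ 2*L := by
      rw [abs_le]; constructor <;> linarith
    linarith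
  · intro c
    rintro U ⟨i, j, rfl⟩ V ⟨i', j', rfl⟩ hUV x hx y hy
    obtain ⟨⟨hx1, hx2⟩, hx3, hx4⟩ := hx
    obtain ⟨⟨hy1, hy2⟩, hy3, hy4⟩ := hy
    have hij : ¬(i = i' ∧ j = j') := by
      rintro ⟨rfl, rfl⟩; exact hUV rfl
    have habs : ∀ a b : ℝ, L ≤ b - a → L ≤ |a - b| := by
      intro a b h
      rw [abs_sub_comm]
      exact le_trans h (le_abs_self _)
    have habs2 : ∀ a b : ℝ, L ≤ a - b → L ≤ |a - b| := by
      intro a b h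
      exact le_trans h (le_abs_self _)
    have key : L ≤ |(x:ℂ).re - (y:ℂ).re| ∨ L ≤ |(x:ℂ).im - (y:ℂ).im| := by
      rcases not_and_or.mp hij with hii | hjj
      · left
        rcases lt_or_gt_of_ne hii with h | h
        · have hcast : (i:ℝ) + 1 ≤ (i':ℝ) := by exact_mod_cast h
          refine habs _ _ ?_
          nlinarith [mul_le_mul_of_nonneg_left hcast (by linarith : (0:ℝ) ≤ 3*L)]
        · have hcast : (i':ℝ) + 1 ≤ (i:ℝ) := by exact_mod_cast h
          refine habs2 _ _ ?_
          nlinarith [mul_le_mul_of_nonneg_left hcast (by linarith : (0:ℝ) ≤ 3*L)]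
      · right
        rcases lt_or_gt_of_ne hjj with h | h
        · have hcast : (j:ℝ) + 1 ≤ (j':ℝ) := by exact_mod_cast h
          refine habs _ _ ?_
          nlinarith [mul_le_mul_of_nonneg_left hcast (by linarith : (0:ℝ) ≤ 3*L)]
        · have hcast : (j':ℝ) + 1 ≤ (j:ℝ) := by exact_mod_cast h
          refine habs2 _ _ ?_
          nlinarith [mul_le_mul_of_nonneg_left hcast (by linarith : (0:ℝ) ≤ 3*L)]
    rw [Subtype.dist_eq]
    rcases key with hk | hk
    · have := complex_re_dist_le (x:ℂ) (y:ℂ)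
      have hRL : R < L := by rw [hLdef]; linarith
      linarith
    · have := complex_im_dist_le (x:ℂ) (y:ℂ)
      have hRL : R < L := by rw [hLdef]; linarith
      linarith
  · intro z
    obtain ⟨c, hc3, ⟨i, hi1, hi2⟩, ⟨j, hj1, hj2⟩⟩ := exists_good_color hL (z:ℂ).re (z:ℂ).im
    refine ⟨⟨c, by omega⟩, _, ⟨i, j, rfl⟩, ?_⟩
    exact ⟨⟨hi1, hi2⟩, ⟨hj1, hj2⟩⟩

end XUpper



/-! ### Path metric machinery -/

section PathMetric

lemma pathLength_le_of_lip {p q : Xtree} (γ : Path p q) (K : ℝ) (hK : 0 ≤ K)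
    (h : ∀ s t : unitInterval, dist ((γ s : Xtree) : ℂ) ((γ t : Xtree) : ℂ) ≤ K * |(s:ℝ) - (t:ℝ)|) :
    pathLength γ ≤ ENNReal.ofReal K := by
  have hF : LipschitzOnWith (Real.toNNReal K) (fun t : ℝ => ((γ.extend t : Xtree) : ℂ))
      (Set.Icc (0:ℝ) 1) := by
    apply LipschitzOnWith.of_dist_le_mul
    intro a ha b hb
    rw [Path.extend_apply γ ha, Path.extend_apply γ hb]
    have := h ⟨a, ha⟩ ⟨b, hb⟩
    rw [Real.coe_toNNReal K hK, Real.dist_eq]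
    exact this
  have hfe : (fun t : unitInterval => ((γ t : Xtree) : ℂ))
      = (fun t : ℝ => ((γ.extend t : Xtree) : ℂ)) ∘ (Subtype.val : unitInterval → ℝ) := by
    funext t
    simp only [Function.comp_apply]
    rw [Path.extend_extends']
  have hmono : MonotoneOn (Subtype.val : unitInterval → ℝ) Set.univ := by
    intro a _ b _ hab
    exact hab
  have himg : (Subtype.val : unitInterval → ℝ) '' Set.univ = Set.Icc (0:ℝ) 1 := by
    rw [Set.image_univ, Subtype.range_coe_subtype]
    rfl
  calc pathLength γ
      = eVariationOn (fun t : ℝ => ((γ.extend t : Xtree) : ℂ)) (Set.Icc (0:ℝ) 1) := by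
        rw [pathLength, hfe, eVariationOn.comp_eq_of_monotoneOn _ _ hmono, himg]
    _ ≤ (Real.toNNReal K : ENNReal) * eVariationOn (id : ℝ → ℝ) (Set.Icc (0:ℝ) 1) := by
        have := hF.comp_eVariationOn_le (Set.mapsTo_id (Set.Icc (0:ℝ) 1))
        simpa using this
    _ ≤ (Real.toNNReal K : ENNReal) * ENNReal.ofReal ((1:ℝ) - 0) := by
        gcongr
        have := MonotoneOn.eVariationOn_le (f := (id : ℝ → ℝ)) (s := Set.Icc (0:ℝ) 1)
          (fun a _ b _ hab => hab) (Set.left_mem_Icc.mpr (by norm_num))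
          (Set.right_mem_Icc.mpr (by norm_num))
        simpa using this
    _ = ENNReal.ofReal K := by
        simp [ENNReal.ofReal]

lemma treePathDist_le_pathLength {p q : Xtree} (γ : Path p q) :
    treePathDist p q ≤ pathLength γ :=
  iInf_le _ _

lemma ofReal_dist_le_treePathDist (p q : Xtree) :
    ENNReal.ofReal (dist (p:ℂ) (q:ℂ)) ≤ treePathDist p q := by
  refine le_iInf fun γ => ?_
  have h := eVariationOn.edist_le (fun t : unitInterval => ((γ t : Xtree) : ℂ))
    (Set.mem_univ (0 : unitInterval)) (Set.mem_univ (1 : unitInterval))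
  simp only [Path.source, Path.target] at h
  rw [← edist_dist]
  exact h

lemma treePathDist_self (p : Xtree) : treePathDist p p = 0 := by
  refine le_antisymm ?_ zero_le
  refine le_trans (treePathDist_le_pathLength (Path.refl p)) ?_
  rw [pathLength]
  apply le_of_eq
  apply eVariationOn.constant_on
  intro x hx y hy
  simp only [Set.mem_image] at hx hy
  obtain ⟨t, _, rfl⟩ := hx
  obtain ⟨s, _, rfl⟩ := hy
  rfl

lemma pathLength_symm {p q : Xtree} (γ : Path p q) :
    pathLength γ.symm = pathLength γ := by
  have hanti : AntitoneOn (unitInterval.symm) (Set.univ : Set unitInterval) := by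
    intro a _ b _ hab
    exact unitInterval.symm_le_symm.mpr hab
  have himg : unitInterval.symm '' Set.univ = Set.univ := by
    rw [Set.image_univ]
    exact (Function.Involutive.surjective unitInterval.symm_symm).range_eq
  have hfe : (fun t : unitInterval => ((γ.symm t : Xtree) : ℂ))
      = (fun t : unitInterval => ((γ t : Xtree) : ℂ)) ∘ unitInterval.symm := by
    funext t
    rfl
  rw [pathLength, hfe, eVariationOn.comp_eq_of_antitoneOn _ _ hanti, himg, pathLength]

lemma treePathDist_symm (p q : Xtree) : treePathDist p q = treePathDist q p := by
  have key : ∀ a b : Xtree, treePathDist a b ≤ treePathDist b a := by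
    intro a b
    refine le_iInf fun γ => ?_
    refine le_trans (treePathDist_le_pathLength γ.symm) ?_
    rw [pathLength_symm]
  exact le_antisymm (key p q) (key q p)

lemma pathLength_trans_le {p q r : Xtree} (γ : Path p q) (η : Path q r) :
    pathLength (γ.trans η) ≤ pathLength γ + pathLength η := by
  set f := fun t : unitInterval => (((γ.trans η) t : Xtree) : ℂ) with hf
  have half_mem : (1/2 : ℝ) ∈ unitInterval := by constructor <;> norm_num
  set half : unitInterval := ⟨1/2, half_mem⟩ with hhalf
  have hsplit : pathLength (γ.trans η)
      = eVariationOn f {t : unitInterval | t ≤ half} + eVariationOn f {t | half ≤ t} := by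
    rw [pathLength, ← eVariationOn.union f (x := half)]
    · congr 1
      ext t
      constructor
      · intro _
        exact le_total t half
      · intro _
        trivial
    · exact ⟨le_refl half, fun t ht => ht⟩
    · exact ⟨le_refl half, fun t ht => ht⟩
  have h1 : eVariationOn f {t : unitInterval | t ≤ half} ≤ pathLength γ := by
    set φ : unitInterval → unitInterval := fun t =>
      ⟨min (2*(t:ℝ)) 1, ⟨le_min (mul_nonneg (by norm_num) t.2.1) (by norm_num), min_le_right _ _⟩⟩ with hφ
    have hmono : MonotoneOn φ {t : unitInterval | t ≤ half} := by
      intro a _ b _ hab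
      simp only [hφ, Subtype.mk_le_mk]
      have : (a:ℝ) ≤ (b:ℝ) := hab
      exact min_le_min (mul_le_mul_of_nonneg_left this (by norm_num)) (le_refl _)
    have heq : Set.EqOn f ((fun s : unitInterval => ((γ s : Xtree) : ℂ)) ∘ φ)
        {t : unitInterval | t ≤ half} := by
      intro t ht
      simp only [Set.mem_setOf_eq] at ht
      have ht' : (t:ℝ) ≤ 1/2 := ht
      have h2t : 2*(t:ℝ) ≤ 1 := by linarith
      simp only [hf, Function.comp_apply]
      rw [Path.trans_apply, dif_pos ht']
      exact congrArg _ (congrArg γ (Subtype.ext (by simp [hφ, min_eq_left h2t])))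
    rw [eVariationOn.eq_of_eqOn heq]
    exact eVariationOn.comp_le_of_monotoneOn _ φ hmono (Set.mapsTo_univ _ _)
  have h2 : eVariationOn f {t : unitInterval | half ≤ t} ≤ pathLength η := by
    set φ : unitInterval → unitInterval := fun t =>
      ⟨max (2*(t:ℝ) - 1) 0, ⟨le_max_right _ _, max_le (by
        have := t.2.2
        linarith) (by norm_num)⟩⟩ with hφ
    have hmono : MonotoneOn φ {t : unitInterval | half ≤ t} := by
      intro a _ b _ hab
      simp only [hφ, Subtype.mk_le_mk]
      have : (a:ℝ) ≤ (b:ℝ) := hab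
      exact max_le_max (sub_le_sub_right (mul_le_mul_of_nonneg_left this (by norm_num)) 1) (le_refl _)
    have heq : Set.EqOn f ((fun s : unitInterval => ((η s : Xtree) : ℂ)) ∘ φ)
        {t : unitInterval | half ≤ t} := by
      intro t ht
      simp only [Set.mem_setOf_eq] at ht
      have ht' : (1/2:ℝ) ≤ (t:ℝ) := ht
      simp only [hf, Function.comp_apply]
      rw [Path.trans_apply]
      by_cases hc : (t:ℝ) ≤ 1/2
      · have hteq : (t:ℝ) = 1/2 := le_antisymm hc ht'
        rw [dif_pos hc]
        have e1 : γ ⟨2*(t:ℝ), by rw [hteq]; norm_num⟩ = q := by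
          have : (⟨2*(t:ℝ), by rw [hteq]; norm_num⟩ : unitInterval) = 1 := by
            apply Subtype.ext
            simp [hteq]
          rw [this, γ.target]
        have e2 : φ t = 0 := by
          apply Subtype.ext
          simp [hφ, hteq]
        rw [e1, e2, η.source]
      · rw [dif_neg hc]
        push_neg at hc
        have h2t : (0:ℝ) ≤ 2*(t:ℝ) - 1 := by linarith
        exact congrArg _ (congrArg η (Subtype.ext (by simp [hφ, max_eq_left h2t])))
    rw [eVariationOn.eq_of_eqOn heq]
    exact eVariationOn.comp_le_of_monotoneOn _ φ hmono (Set.mapsTo_univ _ _)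
  rw [hsplit]
  exact add_le_add h1 h2

lemma treePathDist_triangle (p q r : Xtree) :
    treePathDist p r ≤ treePathDist p q + treePathDist q r := by
  have h1 : treePathDist p q + treePathDist q r
      = ⨅ (γ : Path p q), ⨅ (η : Path q r), (pathLength γ + pathLength η) := by
    rw [treePathDist, treePathDist, ENNReal.iInf_add]
    exact iInf_congr fun γ => ENNReal.add_iInf
  rw [h1]
  refine le_iInf fun γ => le_iInf fun η => ?_
  exact le_trans (treePathDist_le_pathLength (γ.trans η)) (pathLength_trans_le γ η)

end PathMetric

/-! ### Geometry of the tree -/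

section TreeGeometry

/-- Constructor for complex numbers from coordinates. -/
def cw (x y : ℝ) : ℂ := ⟨x, y⟩

@[simp] lemma cw_re (x y : ℝ) : (cw x y).re = x := rfl
@[simp] lemma cw_im (x y : ℝ) : (cw x y).im = y := rfl

lemma mem_Xtree_iff {z : ℂ} :
    z ∈ Xtree ↔ ∃ k : ℕ, 1 ≤ k ∧ (z ∈ Aray k ∨ z ∈ Bseg (k+1)) := by
  simp only [Xtree, Set.mem_iUnion, Set.mem_union, Set.mem_setOf_eq]
  constructor
  · rintro ⟨k, hk, h⟩
    exact ⟨k, hk, h⟩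
  · rintro ⟨k, hk, h⟩
    exact ⟨k, hk, h⟩

lemma mem_Xtree_A {k : ℕ} (hk : 1 ≤ k) {z : ℂ} (him : z.im = k) (hre : (k:ℝ) ≤ z.re) :
    z ∈ Xtree :=
  mem_Xtree_iff.mpr ⟨k, hk, Or.inl ⟨him, hre⟩⟩

lemma mem_Xtree_B {k : ℕ} (hk : 1 ≤ k) {z : ℂ} (hre : z.re = (k:ℝ)+1) (h1 : (k:ℝ) ≤ z.im)
    (h2 : z.im ≤ (k:ℝ)+1) : z ∈ Xtree := by
  refine mem_Xtree_iff.mpr ⟨k, hk, Or.inr ⟨?_, ?_, ?_⟩⟩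
  · push_cast
    linarith
  · push_cast
    linarith
  · push_cast
    linarith

lemma Xtree_cases {z : ℂ} (hz : z ∈ Xtree) :
    (∃ k : ℕ, 1 ≤ k ∧ z.im = k ∧ (k:ℝ) ≤ z.re) ∨
    (∃ k : ℕ, 1 ≤ k ∧ z.re = (k:ℝ)+1 ∧ (k:ℝ) ≤ z.im ∧ z.im ≤ (k:ℝ)+1) := by
  rw [mem_Xtree_iff] at hz
  obtain ⟨k, hk, h | h⟩ := hz
  · exact Or.inl ⟨k, hk, h.1, h.2⟩
  · right
    obtain ⟨h1, h2, h3⟩ := h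
    push_cast at h1 h2 h3
    exact ⟨k, hk, h1, by linarith, by linarith⟩

lemma Xtree_one_le_im {z : ℂ} (hz : z ∈ Xtree) : 1 ≤ z.im := by
  rcases Xtree_cases hz with ⟨k, hk, him, _⟩ | ⟨k, hk, _, him, _⟩
  · rw [him]
    exact_mod_cast hk
  · have : (1:ℝ) ≤ k := by exact_mod_cast hk
    linarith

lemma Xtree_one_le_re {z : ℂ} (hz : z ∈ Xtree) : 1 ≤ z.re := by
  rcases Xtree_cases hz with ⟨k, hk, _, hre⟩ | ⟨k, hk, hre, _, _⟩
  · have : (1:ℝ) ≤ k := by exact_mod_cast hk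
    linarith
  · have : (1:ℝ) ≤ k := by exact_mod_cast hk
    linarith

lemma Xtree_b_nonneg {z : ℂ} (hz : z ∈ Xtree) : 0 ≤ z.re + z.im - 2 := by
  have h1 := Xtree_one_le_im hz
  have h2 := Xtree_one_le_re hz
  linarith

lemma Xtree_ray_of_not_spine {z : ℂ} (hz : z ∈ Xtree) (h : z.im + 1 < z.re) :
    ∃ k : ℕ, 1 ≤ k ∧ z.im = k ∧ (k:ℝ)+1 < z.re := by
  rcases Xtree_cases hz with ⟨k, hk, him, _⟩ | ⟨k, hk, hre, him1, _⟩
  · refine ⟨k, hk, him, ?_⟩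
    rw [him] at h
    exact h
  · exfalso
    linarith

/-! #### Straight segments as paths -/

noncomputable def lerpPath (p q : Xtree)
    (hmem : ∀ t : ℝ, 0 ≤ t → t ≤ 1 → (1 - t) • (p:ℂ) + t • (q:ℂ) ∈ Xtree) : Path p q where
  toFun t := ⟨(1 - (t:ℝ)) • (p:ℂ) + (t:ℝ) • (q:ℂ), hmem t t.2.1 t.2.2⟩
  continuous_toFun := by
    apply Continuous.subtype_mk
    exact ((continuous_const.sub continuous_subtype_val).smul continuous_const).add
      (continuous_subtype_val.smul continuous_const)
  source' := by
    apply Subtype.ext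
    simp
  target' := by
    apply Subtype.ext
    simp

lemma treePathDist_le_dist (p q : Xtree)
    (hmem : ∀ t : ℝ, 0 ≤ t → t ≤ 1 → (1 - t) • (p:ℂ) + t • (q:ℂ) ∈ Xtree) :
    treePathDist p q ≤ ENNReal.ofReal (dist (p:ℂ) (q:ℂ)) := by
  refine le_trans (treePathDist_le_pathLength (lerpPath p q hmem)) ?_
  apply pathLength_le_of_lip _ _ dist_nonneg
  intro s t
  have hval : ((lerpPath p q hmem) s : ℂ) - ((lerpPath p q hmem) t : ℂ)
      = (((t:ℝ) - (s:ℝ))) • ((p:ℂ) - (q:ℂ)) := by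
    show ((1 - (s:ℝ)) • (p:ℂ) + (s:ℝ) • (q:ℂ)) - ((1 - (t:ℝ)) • (p:ℂ) + (t:ℝ) • (q:ℂ)) = _
    module
  rw [dist_eq_norm, hval, norm_smul, Real.norm_eq_abs, dist_eq_norm]
  rw [abs_sub_comm]
  rw [mul_comm]

/-! #### The spine parametrization -/

noncomputable def sig (b : ℝ) : ℂ :=
  if b - 2*⌊b/2⌋ ≤ 1 then cw ((⌊b/2⌋:ℝ) + 1 + (b - 2*⌊b/2⌋)) ((⌊b/2⌋:ℝ) + 1)
  else cw ((⌊b/2⌋:ℝ) + 2) ((⌊b/2⌋:ℝ) + (b - 2*⌊b/2⌋))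

lemma floor_half_bounds (b : ℝ) : 0 ≤ b - 2*⌊b/2⌋ ∧ b - 2*⌊b/2⌋ < 2 := by
  have h1 := Int.floor_le (b/2)
  have h2 := Int.lt_floor_add_one (b/2)
  constructor <;> linarith

lemma sig_re_eq (b : ℝ) : (sig b).re = (⌊b/2⌋:ℝ) + 1 + min (b - 2*⌊b/2⌋) 1 := by
  unfold sig
  split_ifs with h
  · rw [cw_re, min_eq_left h]
  · push_neg at h
    rw [cw_re, min_eq_right (le_of_lt h)]
    ring

lemma sig_im_eq (b : ℝ) : (sig b).im = (⌊b/2⌋:ℝ) + 1 + max (b - 2*⌊b/2⌋ - 1) 0 := by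
  unfold sig
  split_ifs with h
  · rw [cw_im, max_eq_right (by linarith)]
    ring
  · push_neg at h
    rw [cw_im, max_eq_left (by linarith)]
    ring

lemma sig_re_add_im (b : ℝ) : (sig b).re + (sig b).im = b + 2 := by
  rw [sig_re_eq, sig_im_eq]
  rcases le_total (b - 2*⌊b/2⌋) 1 with h | h
  · rw [min_eq_left h, max_eq_right (by linarith)]
    ring
  · rw [min_eq_right h, max_eq_left (by linarith)]
    ring

lemma sig_re_mono : Monotone (fun b => (sig b).re) := by
  intro b₁ b₂ h
  simp only [sig_re_eq]
  have hfl : ⌊b₁/2⌋ ≤ ⌊b₂/2⌋ := Int.floor_mono (by linarith)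
  have hb1 := floor_half_bounds b₁
  have hb2 := floor_half_bounds b₂
  rcases eq_or_lt_of_le hfl with heq | hlt
  · have hmin : min (b₁ - 2*(⌊b₁/2⌋:ℝ)) 1 ≤ min (b₂ - 2*(⌊b₂/2⌋:ℝ)) 1 := by
      rw [← heq]
      exact min_le_min (by linarith) (le_refl _)
    rw [← heq] at hmin ⊢
    linarith
  · have hcast : (⌊b₁/2⌋:ℝ) + 1 ≤ (⌊b₂/2⌋:ℝ) := by exact_mod_cast hlt
    have l1 : min (b₁ - 2*⌊b₁/2⌋) 1 ≤ 1 := min_le_right _ _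
    have l2 : (0:ℝ) ≤ min (b₂ - 2*⌊b₂/2⌋) 1 := le_min hb2.1 (by norm_num)
    linarith

lemma sig_im_mono : Monotone (fun b => (sig b).im) := by
  intro b₁ b₂ h
  simp only [sig_im_eq]
  have hfl : ⌊b₁/2⌋ ≤ ⌊b₂/2⌋ := Int.floor_mono (by linarith)
  have hb1 := floor_half_bounds b₁
  have hb2 := floor_half_bounds b₂
  rcases eq_or_lt_of_le hfl with heq | hlt
  · have hmax : max (b₁ - 2*(⌊b₁/2⌋:ℝ) - 1) 0 ≤ max (b₂ - 2*(⌊b₂/2⌋:ℝ) - 1) 0 := by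
      rw [← heq]
      exact max_le_max (by linarith) (le_refl _)
    rw [← heq] at hmax ⊢
    linarith
  · have hcast : (⌊b₁/2⌋:ℝ) + 1 ≤ (⌊b₂/2⌋:ℝ) := by exact_mod_cast hlt
    have l1 : max (b₁ - 2*⌊b₁/2⌋ - 1) 0 ≤ 1 := max_le (by linarith) (by norm_num)
    have l2 : (0:ℝ) ≤ max (b₂ - 2*⌊b₂/2⌋ - 1) 0 := le_max_right _ _
    linarith

lemma sig_lip (b₁ b₂ : ℝ) : dist (sig b₁) (sig b₂) ≤ |b₁ - b₂| := by
  have key : ∀ c₁ c₂ : ℝ, c₁ ≤ c₂ → dist (sig c₁) (sig c₂) ≤ c₂ - c₁ := by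
    intro c₁ c₂ h
    have h1 : (sig c₁).re ≤ (sig c₂).re := sig_re_mono h
    have h2 : (sig c₁).im ≤ (sig c₂).im := sig_im_mono h
    have h3 := sig_re_add_im c₁
    have h4 := sig_re_add_im c₂
    refine le_trans (complex_dist_le _ _) ?_
    rw [abs_sub_comm, abs_of_nonneg (by linarith), abs_sub_comm, abs_of_nonneg (by linarith)]
    linarith
  rcases le_total b₁ b₂ with h | h
  · rw [abs_sub_comm, abs_of_nonneg (by linarith)]
    exact key b₁ b₂ h
  · rw [abs_of_nonneg (by linarith), dist_comm]
    exact key b₂ b₁ h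

lemma sig_mem (b : ℝ) (hb : 0 ≤ b) : sig b ∈ Xtree := by
  have hn : (0:ℤ) ≤ ⌊b/2⌋ := Int.floor_nonneg.mpr (by positivity)
  obtain ⟨m, hm⟩ : ∃ m : ℕ, (⌊b/2⌋ : ℤ) = m := ⟨⌊b/2⌋.toNat, (Int.toNat_of_nonneg hn).symm⟩
  have hmr : ((⌊b/2⌋ : ℤ) : ℝ) = (m:ℝ) := by exact_mod_cast hm
  have hb1 := (floor_half_bounds b).1
  have hb2 := (floor_half_bounds b).2
  unfold sig
  split_ifs with h
  · apply mem_Xtree_A (k := m + 1) (by omega)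
    · rw [cw_im, hmr]
      push_cast
      ring
    · rw [cw_re, hmr]
      push_cast
      linarith
  · push_neg at h
    apply mem_Xtree_B (k := m + 1) (by omega)
    · rw [cw_re, hmr]
      push_cast
      ring
    · rw [cw_im, hmr]
      push_cast
      linarith
    · rw [cw_im, hmr]
      push_cast
      linarith

lemma sig_of_spine {z : ℂ} (hz : z ∈ Xtree) (hsp : z.re ≤ z.im + 1) :
    sig (z.re + z.im - 2) = z := by
  rcases Xtree_cases hz with ⟨k, hk, him, hre⟩ | ⟨k, hk, hre, him1, him2⟩
  · have hk1 : (1:ℝ) ≤ k := by exact_mod_cast hk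
    have hre2 : z.re ≤ (k:ℝ)+1 := by
      rw [him] at hsp
      exact hsp
    have hfl : ⌊(z.re + z.im - 2)/2⌋ = (k:ℤ) - 1 := by
      rw [Int.floor_eq_iff]
      constructor
      · push_cast
        linarith
      · push_cast
        linarith
    unfold sig
    rw [hfl, if_pos (by push_cast; linarith)]
    apply Complex.ext
    · rw [cw_re]
      push_cast
      linarith
    · rw [cw_im]
      push_cast
      linarith
  · have hk1 : (1:ℝ) ≤ k := by exact_mod_cast hk
    rcases eq_or_lt_of_le him2 with heq | hlt
    · have hfl : ⌊(z.re + z.im - 2)/2⌋ = (k:ℤ) := by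
        rw [Int.floor_eq_iff]
        constructor
        · push_cast
          linarith
        · push_cast
          linarith
      unfold sig
      rw [hfl, if_pos (by push_cast; linarith)]
      apply Complex.ext
      · rw [cw_re]
        push_cast
        linarith
      · rw [cw_im]
        push_cast
        linarith
    · have hfl : ⌊(z.re + z.im - 2)/2⌋ = (k:ℤ) - 1 := by
        rw [Int.floor_eq_iff]
        constructor
        · push_cast
          linarith
        · push_cast
          linarith
      rcases eq_or_lt_of_le him1 with heq2 | hlt2
      · unfold sig
        rw [hfl, if_pos (by push_cast; linarith)]
        apply Complex.ext
        · rw [cw_re]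
          push_cast
          linarith
        · rw [cw_im]
          push_cast
          linarith
      · unfold sig
        rw [hfl, if_neg (by rw [not_le]; push_cast; linarith)]
        apply Complex.ext
        · rw [cw_re]
          push_cast
          linarith
        · rw [cw_im]
          push_cast
          linarith

lemma sig_continuous : Continuous sig := by
  have : LipschitzWith 1 sig := by
    apply LipschitzWith.of_dist_le_mul
    intro a b
    rw [NNReal.coe_one, one_mul, Real.dist_eq]
    exact sig_lip a b
  exact this.continuous

noncomputable def spinePath (b₁ b₂ : ℝ) (h₁ : 0 ≤ b₁) (h₂ : 0 ≤ b₂) :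
    Path (⟨sig b₁, sig_mem _ h₁⟩ : Xtree) (⟨sig b₂, sig_mem _ h₂⟩ : Xtree) where
  toFun t := ⟨sig ((1-(t:ℝ))*b₁ + (t:ℝ)*b₂), sig_mem _ (by
    nlinarith [t.2.1, t.2.2, mul_nonneg (sub_nonneg.mpr t.2.2) h₁, mul_nonneg t.2.1 h₂])⟩
  continuous_toFun := by
    apply Continuous.subtype_mk
    apply sig_continuous.comp
    exact ((continuous_const.sub continuous_subtype_val).mul continuous_const).add
      (continuous_subtype_val.mul continuous_const)
  source' := by
    apply Subtype.ext
    show sig ((1-(0:ℝ))*b₁ + (0:ℝ)*b₂) = sig b₁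
    norm_num
  target' := by
    apply Subtype.ext
    show sig ((1-(1:ℝ))*b₁ + (1:ℝ)*b₂) = sig b₂
    norm_num

lemma treePathDist_sig_le (b₁ b₂ : ℝ) (h₁ : 0 ≤ b₁) (h₂ : 0 ≤ b₂) :
    treePathDist ⟨sig b₁, sig_mem _ h₁⟩ ⟨sig b₂, sig_mem _ h₂⟩ ≤ ENNReal.ofReal |b₁ - b₂| := by
  refine le_trans (treePathDist_le_pathLength (spinePath b₁ b₂ h₁ h₂)) ?_
  apply pathLength_le_of_lip _ _ (abs_nonneg _)
  intro s t
  have hst : ((spinePath b₁ b₂ h₁ h₂) s : ℂ) = sig ((1-(s:ℝ))*b₁ + (s:ℝ)*b₂) := rfl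
  have htt : ((spinePath b₁ b₂ h₁ h₂) t : ℂ) = sig ((1-(t:ℝ))*b₁ + (t:ℝ)*b₂) := rfl
  rw [hst, htt]
  refine le_trans (sig_lip _ _) ?_
  have : (1-(s:ℝ))*b₁ + (s:ℝ)*b₂ - ((1-(t:ℝ))*b₁ + (t:ℝ)*b₂) = ((s:ℝ)-(t:ℝ))*(b₂-b₁) := by
    ring
  rw [this, abs_mul, abs_sub_comm b₂ b₁, mul_comm]

end TreeGeometry

/-! ### Junction separation -/

section Junction

/-- The interior of the ray `A_k` beyond the junction `(k+1, k)`. -/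
def rayInt (k : ℕ) : Set ℂ := {z | z.im = (k:ℝ) ∧ (k:ℝ)+1 < z.re}

/-- The junction point `w_k = (k+1, k)`. -/
def wjun (k : ℕ) : ℂ := cw ((k:ℝ)+1) (k:ℝ)

@[simp] lemma wjun_re (k : ℕ) : (wjun k).re = (k:ℝ)+1 := rfl
@[simp] lemma wjun_im (k : ℕ) : (wjun k).im = (k:ℝ) := rfl

lemma wjun_mem (k : ℕ) (hk : 1 ≤ k) : wjun k ∈ Xtree := by
  apply mem_Xtree_A hk
  · rfl
  · rw [wjun_re]
    linarith

lemma nat_abs_ge_one {m k : ℕ} (h : m ≠ k) : (1:ℝ) ≤ |(m:ℝ) - (k:ℝ)| := by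
  have hne : (m:ℤ) ≠ (k:ℤ) := by exact_mod_cast h
  have h1 : 1 ≤ |(m:ℤ) - (k:ℤ)| := Int.one_le_abs (sub_ne_zero.mpr hne)
  have h2 : ((|(m:ℤ) - (k:ℤ)| : ℤ) : ℝ) = |(m:ℝ) - (k:ℝ)| := by
    push_cast [Int.cast_abs]
    ring_nf
  calc (1:ℝ) = ((1:ℤ):ℝ) := by norm_num
    _ ≤ ((|(m:ℤ) - (k:ℤ)| : ℤ) : ℝ) := by exact_mod_cast h1
    _ = _ := h2

lemma rayInt_open_in (k : ℕ) {z : ℂ} (hz : z ∈ rayInt k) :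
    ∃ ε > 0, ∀ z' ∈ Xtree, dist z' z < ε → z' ∈ rayInt k := by
  obtain ⟨him, hre⟩ := hz
  refine ⟨min (z.re - ((k:ℝ)+1)) (1/2), lt_min (by linarith) (by norm_num), ?_⟩
  intro z' hz' hd
  have hdre : |z'.re - z.re| < z.re - ((k:ℝ)+1) :=
    lt_of_le_of_lt (complex_re_dist_le z' z) (lt_of_lt_of_le hd (min_le_left _ _))
  have hdim : |z'.im - z.im| < 1/2 :=
    lt_of_le_of_lt (complex_im_dist_le z' z) (lt_of_lt_of_le hd (min_le_right _ _))
  rw [abs_lt] at hdre hdim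
  have hre' : (k:ℝ)+1 < z'.re := by linarith
  rcases Xtree_cases hz' with ⟨m, hm, him', hre2⟩ | ⟨m, hm, hreB, him1, him2⟩
  · -- on ray m: must have m = k
    have hmk : m = k := by
      by_contra hne
      have h1 := nat_abs_ge_one hne
      rw [him', him] at hdim
      rcases abs_cases ((m:ℝ) - (k:ℝ)) with ⟨he, _⟩ | ⟨he, _⟩ <;> rw [he] at h1 <;>
        linarith [hdim.1, hdim.2]
    refine ⟨by rw [him', hmk], hre'⟩
  · -- on a vertical segment: impossible
    exfalso
    have hkm : k < m := by
      have hlt : (k:ℝ) < (m:ℝ) := by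
        rw [hreB] at hre'
        linarith
      exact_mod_cast hlt
    have hcast : (k:ℝ) + 1 ≤ (m:ℝ) := by exact_mod_cast hkm
    rw [him] at hdim
    linarith [hdim.1, hdim.2, him1]

lemma rayInt_closed_in (k : ℕ) {z : ℂ} (hzn : z ∉ rayInt k) (hzw : z ≠ wjun k) :
    ∃ ε > 0, ∀ z' ∈ rayInt k, ε ≤ dist z' z := by
  by_cases him : z.im = (k:ℝ)
  · have hre : z.re < (k:ℝ)+1 := by
      rcases lt_trichotomy z.re ((k:ℝ)+1) with h | h | h
      · exact h
      · exfalso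
        refine hzw (Complex.ext ?_ ?_)
        · rw [wjun_re]
          exact h
        · rw [wjun_im]
          exact him
      · exfalso
        exact hzn ⟨him, h⟩
    refine ⟨(k:ℝ)+1 - z.re, by linarith, ?_⟩
    intro z' hz'
    have := complex_re_dist_le z' z
    have h2 : z'.re - z.re ≤ |z'.re - z.re| := le_abs_self _
    have h3 : (k:ℝ)+1 < z'.re := hz'.2
    linarith
  · refine ⟨|z.im - (k:ℝ)|, abs_pos.mpr (sub_ne_zero.mpr him), ?_⟩
    intro z' hz'
    have := complex_im_dist_le z' z
    rw [hz'.1] at this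
    rw [abs_sub_comm]
    exact this

lemma exists_path_through_wjun {k : ℕ} {p q : Xtree}
    (hsep : ((p:ℂ) ∈ rayInt k ∧ (q:ℂ) ∉ rayInt k) ∨ ((p:ℂ) ∉ rayInt k ∧ (q:ℂ) ∈ rayInt k))
    (γ : Path p q) : ∃ t, ((γ t : Xtree) : ℂ) = wjun k := by
  by_contra hcon
  push_neg at hcon
  set g : unitInterval → ℂ := fun t => ((γ t : Xtree) : ℂ) with hg
  have hgc : Continuous g := Continuous.comp continuous_subtype_val γ.continuous
  set A : Set unitInterval := {t | g t ∈ rayInt k} with hA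
  have hAopen : IsOpen A := by
    rw [Metric.isOpen_iff]
    intro t₀ ht₀
    obtain ⟨ε, hε, hball⟩ := rayInt_open_in k ht₀
    obtain ⟨δ, hδ, hcont⟩ := Metric.continuous_iff.mp hgc t₀ ε hε
    refine ⟨δ, hδ, ?_⟩
    intro t ht
    rw [Metric.mem_ball] at ht
    exact hball _ (γ t).2 (hcont t ht)
  have hAcl : IsOpen Aᶜ := by
    rw [Metric.isOpen_iff]
    intro t₀ ht₀
    obtain ⟨ε, hε, hball⟩ := rayInt_closed_in k (ht₀ : g t₀ ∉ rayInt k) (hcon t₀)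
    obtain ⟨δ, hδ, hcont⟩ := Metric.continuous_iff.mp hgc t₀ ε hε
    refine ⟨δ, hδ, ?_⟩
    intro t ht
    rw [Metric.mem_ball] at ht
    intro htA
    exact absurd (hcont t ht) (not_lt.mpr (hball _ htA))
  have hclopen : IsClopen A := ⟨isOpen_compl_iff.mp hAcl, hAopen⟩
  rcases isClopen_iff.mp hclopen with hempty | huniv
  · rcases hsep with ⟨hp, _⟩ | ⟨_, hq⟩
    · have h0 : (0 : unitInterval) ∈ A := by
        show g 0 ∈ rayInt k
        have : g 0 = (p:ℂ) := by
          rw [hg]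
          simp [Path.source]
        rw [this]
        exact hp
      rw [hempty] at h0
      exact h0
    · have h1 : (1 : unitInterval) ∈ A := by
        show g 1 ∈ rayInt k
        have : g 1 = (q:ℂ) := by
          rw [hg]
          simp [Path.target]
        rw [this]
        exact hq
      rw [hempty] at h1
      exact h1
  · rcases hsep with ⟨_, hq⟩ | ⟨hp, _⟩
    · have h1 : (1 : unitInterval) ∈ A := by
        rw [huniv]
        trivial
      have h1' : g 1 ∈ rayInt k := h1
      have hgq : g 1 = (q:ℂ) := by
        rw [hg]
        simp [Path.target]
      rw [hgq] at h1'
      exact hq h1'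
    · have h0 : (0 : unitInterval) ∈ A := by
        rw [huniv]
        trivial
      have h0' : g 0 ∈ rayInt k := h0
      have hgp : g 0 = (p:ℂ) := by
        rw [hg]
        simp [Path.source]
      rw [hgp] at h0'
      exact hp h0'

lemma pathLength_split {p q : Xtree} (γ : Path p q) (t₀ : unitInterval) :
    pathLength γ = eVariationOn (fun t => ((γ t : Xtree):ℂ)) {t | t ≤ t₀}
      + eVariationOn (fun t => ((γ t : Xtree):ℂ)) {t | t₀ ≤ t} := by
  rw [pathLength, ← eVariationOn.union _ (x := t₀)]
  · congr 1
    ext t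
    constructor
    · intro _
      exact le_total t t₀
    · intro _
      trivial
  · exact ⟨le_refl t₀, fun t ht => ht⟩
  · exact ⟨le_refl t₀, fun t ht => ht⟩

lemma treePathDist_ge_through (p q w : Xtree)
    (hsep : ∀ γ : Path p q, ∃ t, ((γ t : Xtree):ℂ) = (w:ℂ)) :
    ENNReal.ofReal (dist (p:ℂ) (w:ℂ) + dist (w:ℂ) (q:ℂ)) ≤ treePathDist p q := by
  refine le_iInf fun γ => ?_
  obtain ⟨t₀, ht₀⟩ := hsep γ
  rw [pathLength_split γ t₀]
  rw [ENNReal.ofReal_add dist_nonneg dist_nonneg]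
  apply add_le_add
  · have h := eVariationOn.edist_le (fun t : unitInterval => ((γ t : Xtree) : ℂ))
      (show (0:unitInterval) ∈ {t | t ≤ t₀} from unitInterval.nonneg')
      (le_refl t₀ : t₀ ∈ {t | t ≤ t₀})
    simp only [Path.source] at h
    rw [ht₀] at h
    rw [← edist_dist]
    exact h
  · have h := eVariationOn.edist_le (fun t : unitInterval => ((γ t : Xtree) : ℂ))
      (le_refl t₀ : t₀ ∈ {t | t₀ ≤ t})
      (show (1:unitInterval) ∈ {t | t₀ ≤ t} from unitInterval.le_one')
    simp only [Path.target] at h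
    rw [ht₀] at h
    rw [← edist_dist]
    exact h

lemma tPD_lower_through {k : ℕ} (hk : 1 ≤ k) (x y : Xtree)
    (hsep : ((x:ℂ) ∈ rayInt k ∧ (y:ℂ) ∉ rayInt k) ∨ ((x:ℂ) ∉ rayInt k ∧ (y:ℂ) ∈ rayInt k)) :
    ENNReal.ofReal (dist (x:ℂ) (wjun k) + dist (wjun k) (y:ℂ)) ≤ treePathDist x y := by
  have := treePathDist_ge_through x y ⟨wjun k, wjun_mem k hk⟩ (fun γ =>
    exists_path_through_wjun hsep γ)
  exact this

end Junction

/-! ### The cover of the tree in the path metric -/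

section TreeCover

def bval (z : ℂ) : ℝ := z.re + z.im - 2

def isSpine (z : ℂ) : Prop := z.re ≤ z.im + 1

/-- Spine pieces (with stubs of length `< N` of the rays attached in the window). -/
def SPm (N : ℝ) (n : ℤ) : Set Xtree :=
  {z : Xtree | (isSpine (z:ℂ) ∧ ⌊bval (z:ℂ) / N⌋ = n) ∨
    (¬ isSpine (z:ℂ) ∧ ⌊((z:ℂ).re - ((z:ℂ).im + 1)) / N⌋ = 0 ∧ ⌊(2*(z:ℂ).im - 1)/N⌋ = n)}

/-- Ray pieces. -/
def RPm (N : ℝ) (K m : ℤ) : Set Xtree :=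
  {z : Xtree | ¬ isSpine (z:ℂ) ∧ (z:ℂ).im = (K:ℝ) ∧ ⌊((z:ℂ).re - ((z:ℂ).im + 1)) / N⌋ = m}

/-- The two families covering the tree. -/
def famX (N : ℝ) (i : Fin 2) : Set (Set Xtree) :=
  {U | (∃ n : ℤ, n % 2 = ((i:ℕ):ℤ) ∧ U = SPm N n) ∨
    (∃ K m : ℤ, 1 ≤ m ∧ (⌊(2*(K:ℝ) - 1)/N⌋ + m) % 2 = ((i:ℕ):ℤ) ∧ U = RPm N K m)}

lemma floor_div_bounds {N x : ℝ} (hN : 0 < N) {n : ℤ} (h : ⌊x / N⌋ = n) :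
    (n:ℝ)*N ≤ x ∧ x < ((n:ℝ)+1)*N := by
  have h1 := Int.floor_le (x/N)
  have h2 := Int.lt_floor_add_one (x/N)
  rw [h] at h1 h2
  constructor
  · have := mul_le_mul_of_nonneg_right h1 hN.le
    rwa [div_mul_cancel₀ _ hN.ne'] at this
  · have := mul_lt_mul_of_pos_right h2 hN
    rwa [div_mul_cancel₀ _ hN.ne'] at this

lemma bval_diff_le (z w : ℂ) : |bval z - bval w| ≤ 2 * dist z w := by
  have h1 := complex_re_dist_le z w
  have h2 := complex_im_dist_le z w
  have he : bval z - bval w = (z.re - w.re) + (z.im - w.im) := by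
    unfold bval
    ring
  rw [he]
  calc |(z.re - w.re) + (z.im - w.im)| ≤ |z.re - w.re| + |z.im - w.im| := abs_add_le _ _
    _ ≤ 2 * dist z w := by linarith

lemma bval_wjun (k : ℕ) : bval (wjun k) = 2*(k:ℝ) - 1 := by
  unfold bval
  rw [wjun_re, wjun_im]
  ring

lemma isSpine_wjun (k : ℕ) : isSpine (wjun k) := by
  unfold isSpine
  rw [wjun_re, wjun_im]

lemma dist_wjun {k : ℕ} {z : ℂ} (him : z.im = (k:ℝ)) :
    dist z (wjun k) = |z.re - ((k:ℝ)+1)| := by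
  rw [Complex.dist_of_im_eq (by rw [him, wjun_im]), Real.dist_eq, wjun_re]

lemma real_smul_re (r : ℝ) (z : ℂ) : (r • z).re = r * z.re := by
  rw [Complex.real_smul, Complex.mul_re, Complex.ofReal_re, Complex.ofReal_im]
  ring

lemma real_smul_im (r : ℝ) (z : ℂ) : (r • z).im = r * z.im := by
  rw [Complex.real_smul, Complex.mul_im, Complex.ofReal_re, Complex.ofReal_im]
  ring

lemma lerp_mem_A {k : ℕ} (hk : 1 ≤ k) {z w : ℂ} (hz : z.im = (k:ℝ)) (hw : w.im = (k:ℝ))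
    (hz2 : (k:ℝ) ≤ z.re) (hw2 : (k:ℝ) ≤ w.re) :
    ∀ t : ℝ, 0 ≤ t → t ≤ 1 → (1 - t) • z + t • w ∈ Xtree := by
  intro t h0 h1
  apply mem_Xtree_A hk
  · rw [Complex.add_im, real_smul_im, real_smul_im, hz, hw]
    ring
  · rw [Complex.add_re, real_smul_re, real_smul_re]
    nlinarith [mul_le_mul_of_nonneg_left hz2 (by linarith : (0:ℝ) ≤ 1 - t),
      mul_le_mul_of_nonneg_left hw2 h0]

/-- Every point of a spine piece is within path distance `N` of a spine point whose
`b`-value lies in the window. -/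
lemma SPm_foot {N : ℝ} (hN : 0 < N) {n : ℤ} {z : Xtree} (hz : z ∈ SPm N n) :
    ∃ (bz : ℝ) (h0 : 0 ≤ bz), (n:ℝ)*N ≤ bz ∧ bz < ((n:ℝ)+1)*N ∧
      treePathDist z ⟨sig bz, sig_mem bz h0⟩ ≤ ENNReal.ofReal N := by
  rcases hz with ⟨hsp, hfl⟩ | ⟨hnsp, hfl0, hfla⟩
  · obtain ⟨hb1, hb2⟩ := floor_div_bounds hN hfl
    refine ⟨bval (z:ℂ), Xtree_b_nonneg z.2, hb1, hb2, ?_⟩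
    have hzz : (⟨sig (bval (z:ℂ)), sig_mem _ (Xtree_b_nonneg z.2)⟩ : Xtree) = z :=
      Subtype.ext (sig_of_spine z.2 hsp)
    rw [hzz, treePathDist_self]
    exact zero_le
  · obtain ⟨k, hk, him, hre⟩ := Xtree_ray_of_not_spine z.2 (not_le.mp hnsp)
    have hbz : (0:ℝ) ≤ 2*(z:ℂ).im - 1 := by
      have := Xtree_one_le_im z.2
      linarith
    obtain ⟨ha1, ha2⟩ := floor_div_bounds hN hfla
    refine ⟨2*(z:ℂ).im - 1, hbz, ha1, ha2, ?_⟩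
    have hw : sig (2*(z:ℂ).im - 1) = wjun k := by
      have h1 : bval (wjun k) = 2*(z:ℂ).im - 1 := by
        rw [bval_wjun, him]
      rw [← h1]
      exact sig_of_spine (wjun_mem k hk) (isSpine_wjun k)
    have hzz : (⟨sig (2*(z:ℂ).im - 1), sig_mem _ hbz⟩ : Xtree)
        = ⟨wjun k, wjun_mem k hk⟩ := Subtype.ext hw
    rw [hzz]
    have hmem := lerp_mem_A hk him (wjun_im k) (by linarith) (by rw [wjun_re]; linarith)
    refine le_trans (treePathDist_le_dist z ⟨wjun k, wjun_mem k hk⟩ hmem) ?_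
    apply ENNReal.ofReal_le_ofReal
    have hd : dist (z:ℂ) (wjun k) = |(z:ℂ).re - ((k:ℝ)+1)| := dist_wjun him
    rw [hd, abs_of_nonneg (by linarith)]
    obtain ⟨h01, h02⟩ := floor_div_bounds hN hfl0
    rw [him] at h02
    norm_num at h01 h02
    linarith

lemma SPm_bound {N : ℝ} (hN : 0 < N) {n : ℤ} {z w : Xtree}
    (hz : z ∈ SPm N n) (hw : w ∈ SPm N n) :
    treePathDist z w ≤ ENNReal.ofReal (3*N) := by
  obtain ⟨bz, h0z, hz1, hz2, hz3⟩ := SPm_foot hN hz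
  obtain ⟨bw, h0w, hw1, hw2, hw3⟩ := SPm_foot hN hw
  have hsig : treePathDist ⟨sig bz, sig_mem bz h0z⟩ ⟨sig bw, sig_mem bw h0w⟩
      ≤ ENNReal.ofReal N := by
    refine le_trans (treePathDist_sig_le bz bw h0z h0w) (ENNReal.ofReal_le_ofReal ?_)
    rw [abs_le]
    constructor <;> linarith
  have hfw : treePathDist ⟨sig bw, sig_mem bw h0w⟩ w ≤ ENNReal.ofReal N := by
    rw [treePathDist_symm]
    exact hw3
  have hsum : ENNReal.ofReal N + (ENNReal.ofReal N + ENNReal.ofReal N)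
      = ENNReal.ofReal (3*N) := by
    rw [← ENNReal.ofReal_add hN.le hN.le, ← ENNReal.ofReal_add hN.le (by linarith : (0:ℝ) ≤ N + N)]
    ring_nf
  calc treePathDist z w
      ≤ treePathDist z ⟨sig bz, sig_mem bz h0z⟩
        + treePathDist ⟨sig bz, sig_mem bz h0z⟩ w := treePathDist_triangle _ _ _
    _ ≤ treePathDist z ⟨sig bz, sig_mem bz h0z⟩
        + (treePathDist ⟨sig bz, sig_mem bz h0z⟩ ⟨sig bw, sig_mem bw h0w⟩
          + treePathDist ⟨sig bw, sig_mem bw h0w⟩ w) :=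
        add_le_add (le_refl _) (treePathDist_triangle _ _ _)
    _ ≤ ENNReal.ofReal N + (ENNReal.ofReal N + ENNReal.ofReal N) :=
        add_le_add hz3 (add_le_add hsig hfw)
    _ = ENNReal.ofReal (3*N) := hsum

lemma RPm_bound {N : ℝ} (hN : 0 < N) {K m : ℤ} {z w : Xtree}
    (hz : z ∈ RPm N K m) (hw : w ∈ RPm N K m) :
    treePathDist z w ≤ ENNReal.ofReal (3*N) := by
  obtain ⟨hz1, hz2, hz3⟩ := hz
  obtain ⟨hw1, hw2, hw3⟩ := hw
  obtain ⟨k, hk, him, hre⟩ := Xtree_ray_of_not_spine z.2 (not_le.mp hz1)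
  have himw : (w:ℂ).im = (k:ℝ) := by
    rw [hw2, ← hz2, him]
  obtain ⟨k', hk', himw', hrew⟩ := Xtree_ray_of_not_spine w.2 (not_le.mp hw1)
  have hkk : (k':ℝ) = (k:ℝ) := by
    rw [← himw', himw]
  have hmem := lerp_mem_A hk him himw (by linarith) (by linarith)
  refine le_trans (treePathDist_le_dist z w hmem) (ENNReal.ofReal_le_ofReal ?_)
  have hd : dist (z:ℂ) (w:ℂ) = |(z:ℂ).re - (w:ℂ).re| := by
    rw [Complex.dist_of_im_eq (by rw [him, himw]), Real.dist_eq]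
  obtain ⟨ha1, ha2⟩ := floor_div_bounds hN hz3
  obtain ⟨hb1, hb2⟩ := floor_div_bounds hN hw3
  rw [hd, abs_le]
  rw [him] at ha1 ha2
  rw [himw] at hb1 hb2
  constructor <;> linarith

end TreeCover

section TreeDisjoint

lemma spine_not_rayInt {z : ℂ} (hsp : isSpine z) (k : ℕ) : z ∉ rayInt k := by
  rintro ⟨h1, h2⟩
  unfold isSpine at hsp
  rw [h1] at hsp
  linarith

lemma level_not_rayInt {z : ℂ} {c : ℝ} (him : z.im = c) {k : ℕ} (hne : c ≠ (k:ℝ)) :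
    z ∉ rayInt k := by
  rintro ⟨h1, _⟩
  exact hne (by rw [← him, h1])

set_option maxHeartbeats 1000000 in
lemma famX_disjoint {R N : ℝ} (hR : 0 < R) (hNval : N = 8*(R+1)) {i : Fin 2} :
    ∀ U ∈ famX N i, ∀ V ∈ famX N i, U ≠ V →
      ∀ x ∈ U, ∀ y ∈ V, ENNReal.ofReal R < treePathDist x y := by
  have hN : 0 < N := by
    rw [hNval]
    linarith
  have hdirect : ∀ x y : Xtree, R < dist (x:ℂ) (y:ℂ) →
      ENNReal.ofReal R < treePathDist x y := by
    intro x y h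
    exact lt_of_lt_of_le ((ENNReal.ofReal_lt_ofReal_iff_of_nonneg hR.le).mpr h)
      (ofReal_dist_le_treePathDist x y)
  have hthrough : ∀ (k : ℕ), 1 ≤ k → ∀ x y : Xtree,
      (((x:ℂ) ∈ rayInt k ∧ (y:ℂ) ∉ rayInt k) ∨ ((x:ℂ) ∉ rayInt k ∧ (y:ℂ) ∈ rayInt k)) →
      R < dist (x:ℂ) (wjun k) + dist (wjun k) (y:ℂ) →
      ENNReal.ofReal R < treePathDist x y := by
    intro k hk x y hsep h
    exact lt_of_lt_of_le ((ENNReal.ofReal_lt_ofReal_iff_of_nonneg hR.le).mpr h)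
      (tPD_lower_through hk x y hsep)
  rintro U hU V hV hUV x hx y hy
  rcases hU with ⟨n, hpar, rfl⟩ | ⟨K, m, hm, hpar, rfl⟩ <;>
    rcases hV with ⟨n', hpar', rfl⟩ | ⟨K', m', hm', hpar', rfl⟩
  · -- spine piece vs spine piece
    have hnn : n ≠ n' := by
      intro h
      exact hUV (by rw [h])
    have hwin : ∀ {a b : ℝ}, (n:ℝ)*N ≤ a → a < ((n:ℝ)+1)*N → (n':ℝ)*N ≤ b →
        b < ((n':ℝ)+1)*N → N ≤ |a - b| := by
      intro a b h1 h2 h3 h4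
      have hor : n + 2 ≤ n' ∨ n' + 2 ≤ n := by omega
      rcases hor with hlt | hlt
      · have hc : ((n:ℝ)+2) ≤ (n':ℝ) := by exact_mod_cast hlt
        have hprod : ((n:ℝ)+2)*N ≤ (n':ℝ)*N := mul_le_mul_of_nonneg_right hc hN.le
        have e2 : ((n:ℝ)+1)*N = (n:ℝ)*N + N := by ring
        have e3 : ((n:ℝ)+2)*N = (n:ℝ)*N + 2*N := by ring
        rw [abs_sub_comm, abs_of_nonneg (by linarith)]
        linarith
      · have hc : ((n':ℝ)+2) ≤ (n:ℝ) := by exact_mod_cast hlt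
        have hprod : ((n':ℝ)+2)*N ≤ (n:ℝ)*N := mul_le_mul_of_nonneg_right hc hN.le
        have e2 : ((n':ℝ)+1)*N = (n':ℝ)*N + N := by ring
        have e3 : ((n':ℝ)+2)*N = (n':ℝ)*N + 2*N := by ring
        rw [abs_of_nonneg (by linarith)]
        linarith
    rcases hx with ⟨hspx, hflx⟩ | ⟨hnspx, hflx0, hflxa⟩ <;>
      rcases hy with ⟨hspy, hfly⟩ | ⟨hnspy, hfly0, hflya⟩
    · -- both spine
      obtain ⟨hx1, hx2⟩ := floor_div_bounds hN hflx
      obtain ⟨hy1, hy2⟩ := floor_div_bounds hN hfly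
      have hbb := hwin hx1 hx2 hy1 hy2
      apply hdirect
      have := bval_diff_le (x:ℂ) (y:ℂ)
      rw [hNval] at hbb
      linarith
    ·
      obtain ⟨k', hk', himy, hrey⟩ := Xtree_ray_of_not_spine y.2 (not_le.mp hnspy)
      apply hthrough k' hk' x y (Or.inr ⟨spine_not_rayInt hspx k', ⟨himy, hrey⟩⟩)
      obtain ⟨hx1, hx2⟩ := floor_div_bounds hN hflx
      have hflya' : ⌊(2*(k':ℝ) - 1)/N⌋ = n' := by
        rw [← himy]
        exact hflya
      obtain ⟨hy1, hy2⟩ := floor_div_bounds hN hflya'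
      have hwx : N ≤ |bval (x:ℂ) - bval (wjun k')| := by
        rw [bval_wjun]
        exact hwin hx1 hx2 hy1 hy2
      have hd2 := bval_diff_le (x:ℂ) (wjun k')
      have hd3 := dist_nonneg (x := wjun k') (y := (y:ℂ))
      rw [hNval] at hwx
      linarith
    ·
      obtain ⟨k, hk, himx, hrex⟩ := Xtree_ray_of_not_spine x.2 (not_le.mp hnspx)
      apply hthrough k hk x y (Or.inl ⟨⟨himx, hrex⟩, spine_not_rayInt hspy k⟩)
      obtain ⟨hy1, hy2⟩ := floor_div_bounds hN hfly
      have hflxa' : ⌊(2*(k:ℝ) - 1)/N⌋ = n := by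
        rw [← himx]
        exact hflxa
      obtain ⟨hx1, hx2⟩ := floor_div_bounds hN hflxa'
      have hwy : N ≤ |bval (wjun k) - bval (y:ℂ)| := by
        rw [bval_wjun]
        exact hwin hx1 hx2 hy1 hy2
      have hd2 := bval_diff_le (wjun k) (y:ℂ)
      have hd3 := dist_nonneg (x := (x:ℂ)) (y := wjun k)
      rw [hNval] at hwy
      linarith
    ·
      obtain ⟨k, hk, himx, hrex⟩ := Xtree_ray_of_not_spine x.2 (not_le.mp hnspx)
      obtain ⟨k', hk', himy, hrey⟩ := Xtree_ray_of_not_spine y.2 (not_le.mp hnspy)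
      have hflxa' : ⌊(2*(k:ℝ) - 1)/N⌋ = n := by
        rw [← himx]
        exact hflxa
      have hflya' : ⌊(2*(k':ℝ) - 1)/N⌋ = n' := by
        rw [← himy]
        exact hflya
      obtain ⟨hx1, hx2⟩ := floor_div_bounds hN hflxa'
      obtain ⟨hy1, hy2⟩ := floor_div_bounds hN hflya'
      have hkk : N ≤ |2*(k:ℝ) - 1 - (2*(k':ℝ) - 1)| := hwin hx1 hx2 hy1 hy2
      have h2 : |2*(k:ℝ) - 1 - (2*(k':ℝ) - 1)| = 2 * |(k:ℝ) - (k':ℝ)| := by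
        rw [show 2*(k:ℝ)-1-(2*(k':ℝ)-1) = 2*((k:ℝ)-(k':ℝ)) by ring, abs_mul, abs_two]
      have hne : (k':ℝ) ≠ (k:ℝ) := by
        intro h
        rw [h2, h] at hkk
        simp at hkk
        linarith
      apply hthrough k hk x y (Or.inl ⟨⟨himx, hrex⟩, level_not_rayInt himy hne⟩)
      have him' := complex_im_dist_le (wjun k) (y:ℂ)
      rw [wjun_im, himy] at him'
      have hd3 := dist_nonneg (x := (x:ℂ)) (y := wjun k)
      rw [h2] at hkk
      have habs : |(k:ℝ) - (k':ℝ)| ≤ dist (wjun k) (y:ℂ) := him'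
      rw [hNval] at hkk
      linarith
  · -- spine piece vs ray piece
    obtain ⟨hnspy, hy2, hy3⟩ := hy
    obtain ⟨k', hk', himy, hrey⟩ := Xtree_ray_of_not_spine y.2 (not_le.mp hnspy)
    have hKk : (K':ℝ) = (k':ℝ) := by
      rw [← hy2, himy]
    obtain ⟨hhy1, hhy2⟩ := floor_div_bounds hN hy3
    rw [himy] at hhy1 hhy2
    have hm'1 : (1:ℝ) ≤ (m':ℝ) := by exact_mod_cast hm'
    have hmN : N ≤ (m':ℝ)*N := by
      nlinarith [hm'1, hN.le]
    have hdisty : dist (wjun k') (y:ℂ) = (y:ℂ).re - ((k':ℝ)+1) := by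
      rw [dist_comm, dist_wjun himy, abs_of_nonneg (by linarith)]
    rcases hx with ⟨hspx, hflx⟩ | ⟨hnspx, hflx0, hflxa⟩
    · apply hthrough k' hk' x y (Or.inr ⟨spine_not_rayInt hspx k', ⟨himy, hrey⟩⟩)
      have hd3 := dist_nonneg (x := (x:ℂ)) (y := wjun k')
      rw [hdisty]
      linarith
    · obtain ⟨k, hk, himx, hrex⟩ := Xtree_ray_of_not_spine x.2 (not_le.mp hnspx)
      by_cases hkk' : (k:ℝ) = (k':ℝ)
      · -- same ray: parity forces m' ≥ 2
        have hfln : ⌊(2*(K':ℝ) - 1)/N⌋ = n := by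
          rw [hKk, ← hkk', ← himx]
          exact hflxa
        rw [hfln] at hpar'
        have hm2 : 2 ≤ m' := by omega
        have hm2' : (2:ℝ) ≤ (m':ℝ) := by exact_mod_cast hm2
        apply hdirect
        have hrele := complex_re_dist_le (x:ℂ) (y:ℂ)
        obtain ⟨hx01, hx02⟩ := floor_div_bounds hN hflx0
        rw [himx] at hx02
        norm_num at hx01 hx02
        have h2N : 2*N ≤ (m':ℝ)*N := by nlinarith
        have : (y:ℂ).re - (x:ℂ).re ≤ |(x:ℂ).re - (y:ℂ).re| := by
          rw [abs_sub_comm]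
          exact le_abs_self _
        nlinarith
      · apply hthrough k' hk' x y (Or.inr ⟨level_not_rayInt himx hkk', ⟨himy, hrey⟩⟩)
        have hd3 := dist_nonneg (x := (x:ℂ)) (y := wjun k')
        rw [hdisty]
        linarith
  · -- ray piece vs spine piece
    obtain ⟨hnspx, hx2, hx3⟩ := hx
    obtain ⟨k, hk, himx, hrex⟩ := Xtree_ray_of_not_spine x.2 (not_le.mp hnspx)
    have hKk : (K:ℝ) = (k:ℝ) := by
      rw [← hx2, himx]
    obtain ⟨hhx1, hhx2⟩ := floor_div_bounds hN hx3
    rw [himx] at hhx1 hhx2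
    have hm1 : (1:ℝ) ≤ (m:ℝ) := by exact_mod_cast hm
    have hmN : N ≤ (m:ℝ)*N := by
      nlinarith [hm1, hN.le]
    have hdistx : dist (x:ℂ) (wjun k) = (x:ℂ).re - ((k:ℝ)+1) := by
      rw [dist_wjun himx, abs_of_nonneg (by linarith)]
    rcases hy with ⟨hspy, hfly⟩ | ⟨hnspy, hfly0, hflya⟩
    · apply hthrough k hk x y (Or.inl ⟨⟨himx, hrex⟩, spine_not_rayInt hspy k⟩)
      have hd3 := dist_nonneg (x := wjun k) (y := (y:ℂ))
      rw [hdistx]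
      linarith
    · obtain ⟨k', hk', himy, hrey⟩ := Xtree_ray_of_not_spine y.2 (not_le.mp hnspy)
      by_cases hkk' : (k':ℝ) = (k:ℝ)
      · have hfln : ⌊(2*(K:ℝ) - 1)/N⌋ = n' := by
          rw [hKk, ← hkk', ← himy]
          exact hflya
        rw [hfln] at hpar
        have hm2 : 2 ≤ m := by omega
        have hm2' : (2:ℝ) ≤ (m:ℝ) := by exact_mod_cast hm2
        apply hdirect
        have hrele := complex_re_dist_le (x:ℂ) (y:ℂ)
        obtain ⟨hy01, hy02⟩ := floor_div_bounds hN hfly0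
        rw [himy] at hy02
        norm_num at hy01 hy02
        have h2N : 2*N ≤ (m:ℝ)*N := by nlinarith
        have : (x:ℂ).re - (y:ℂ).re ≤ |(x:ℂ).re - (y:ℂ).re| := le_abs_self _
        nlinarith
      · apply hthrough k hk x y (Or.inl ⟨⟨himx, hrex⟩, level_not_rayInt himy hkk'⟩)
        have hd3 := dist_nonneg (x := wjun k) (y := (y:ℂ))
        rw [hdistx]
        linarith
  · -- ray piece vs ray piece
    obtain ⟨hnspx, hx2, hx3⟩ := hx
    obtain ⟨hnspy, hy2, hy3⟩ := hy
    obtain ⟨k, hk, himx, hrex⟩ := Xtree_ray_of_not_spine x.2 (not_le.mp hnspx)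
    obtain ⟨k', hk', himy, hrey⟩ := Xtree_ray_of_not_spine y.2 (not_le.mp hnspy)
    have hKk : (K:ℝ) = (k:ℝ) := by
      rw [← hx2, himx]
    have hKk' : (K':ℝ) = (k':ℝ) := by
      rw [← hy2, himy]
    obtain ⟨hhx1, hhx2⟩ := floor_div_bounds hN hx3
    rw [himx] at hhx1 hhx2
    obtain ⟨hhy1, hhy2⟩ := floor_div_bounds hN hy3
    rw [himy] at hhy1 hhy2
    have hm1 : (1:ℝ) ≤ (m:ℝ) := by exact_mod_cast hm
    have hmN : N ≤ (m:ℝ)*N := by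
      nlinarith [hm1, hN.le]
    by_cases hKK : K = K'
    · -- same ray, different windows
      have hmm : m ≠ m' := by
        intro h
        exact hUV (by rw [hKK, h])
      rw [hKK] at hpar
      have hor : m + 2 ≤ m' ∨ m' + 2 ≤ m := by omega
      have hkk' : (k:ℝ) = (k':ℝ) := by
        rw [← hKk, hKK, hKk']
      apply hdirect
      have hrele := complex_re_dist_le (x:ℂ) (y:ℂ)
      rcases hor with hlt | hlt
      · have hc : ((m:ℝ)+2) ≤ (m':ℝ) := by exact_mod_cast hlt
        have hprod : ((m:ℝ)+2)*N ≤ (m':ℝ)*N := mul_le_mul_of_nonneg_right hc hN.le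
        have : (y:ℂ).re - (x:ℂ).re ≤ |(x:ℂ).re - (y:ℂ).re| := by
          rw [abs_sub_comm]
          exact le_abs_self _
        nlinarith
      · have hc : ((m':ℝ)+2) ≤ (m:ℝ) := by exact_mod_cast hlt
        have hprod : ((m':ℝ)+2)*N ≤ (m:ℝ)*N := mul_le_mul_of_nonneg_right hc hN.le
        have : (x:ℂ).re - (y:ℂ).re ≤ |(x:ℂ).re - (y:ℂ).re| := le_abs_self _
        nlinarith
    · -- different rays
      have hkk' : (k':ℝ) ≠ (k:ℝ) := by
        intro h
        apply hKK
        have : (K:ℝ) = (K':ℝ) := by rw [hKk, hKk', h]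
        exact_mod_cast this
      apply hthrough k hk x y (Or.inl ⟨⟨himx, hrex⟩, level_not_rayInt himy hkk'⟩)
      have hdistx : dist (x:ℂ) (wjun k) = (x:ℂ).re - ((k:ℝ)+1) := by
        rw [dist_wjun himx, abs_of_nonneg (by linarith)]
      have hd3 := dist_nonneg (x := wjun k) (y := (y:ℂ))
      rw [hdistx]
      linarith

end TreeDisjoint

section TreeAssembly

lemma famX_cover {N : ℝ} (hN : 0 < N) (z : Xtree) : ∃ i : Fin 2, ∃ U ∈ famX N i, z ∈ U := by
  by_cases hsp : isSpine (z:ℂ)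
  · set n := ⌊bval (z:ℂ)/N⌋ with hn
    refine ⟨if n % 2 = 0 then 0 else 1, SPm N n, Or.inl ⟨n, ?_, rfl⟩, Or.inl ⟨hsp, rfl⟩⟩
    split_ifs with h
    · simp [h]
    · have := Int.emod_two_eq_zero_or_one n
      simp only [Fin.isValue, Fin.val_one, Nat.cast_one]
      omega
  · obtain ⟨k, hk, him, hre⟩ := Xtree_ray_of_not_spine z.2 (not_le.mp hsp)
    by_cases hm : ⌊((z:ℂ).re - ((z:ℂ).im + 1))/N⌋ = 0
    · set n := ⌊(2*(z:ℂ).im - 1)/N⌋ with hn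
      refine ⟨if n % 2 = 0 then 0 else 1, SPm N n, Or.inl ⟨n, ?_, rfl⟩,
        Or.inr ⟨hsp, hm, rfl⟩⟩
      split_ifs with h
      · simp [h]
      · have := Int.emod_two_eq_zero_or_one n
        simp only [Fin.isValue, Fin.val_one, Nat.cast_one]
        omega
    · set m := ⌊((z:ℂ).re - ((z:ℂ).im + 1))/N⌋ with hmdef
      have hm0 : 0 ≤ m := Int.floor_nonneg.mpr (div_nonneg (by linarith) hN.le)
      have hm1 : 1 ≤ m := by omega
      refine ⟨if (⌊(2*(((k:ℤ)):ℝ) - 1)/N⌋ + m) % 2 = 0 then 0 else 1, RPm N (k:ℤ) m,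
        Or.inr ⟨(k:ℤ), m, hm1, ?_, rfl⟩, ⟨hsp, ?_, rfl⟩⟩
      · split_ifs with h
        · simpa using h
        · have := Int.emod_two_eq_zero_or_one (⌊(2*(((k:ℤ)):ℝ) - 1)/N⌋ + m)
          simp only [Fin.isValue, Fin.val_one, Nat.cast_one]
          omega
      · rw [him]
        norm_cast

lemma dist_T_le {T : Type*} [MetricSpace T] (e : T ≃ Xtree)
    (hd : ∀ p q : T, ENNReal.ofReal (dist p q) = treePathDist (e p) (e q))
    (p q : T) {C : ℝ} (hC : 0 ≤ C) (h : treePathDist (e p) (e q) ≤ ENNReal.ofReal C) :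
    dist p q ≤ C := by
  rw [← hd p q] at h
  exact (ENNReal.ofReal_le_ofReal_iff hC).mp h

lemma dist_T_lt {T : Type*} [MetricSpace T] (e : T ≃ Xtree)
    (hd : ∀ p q : T, ENNReal.ofReal (dist p q) = treePathDist (e p) (e q))
    (p q : T) {C : ℝ} (h : ENNReal.ofReal C < treePathDist (e p) (e q)) : C < dist p q := by
  by_contra hcon
  push_neg at hcon
  have h2 : treePathDist (e p) (e q) ≤ ENNReal.ofReal C := by
    rw [← hd p q]
    exact ENNReal.ofReal_le_ofReal hcon
  exact absurd h (not_lt.mpr h2)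

lemma lerp_cw (t a b c d : ℝ) :
    (1 - t) • (cw a b) + t • (cw c d) = cw ((1-t)*a + t*c) ((1-t)*b + t*d) := by
  apply Complex.ext
  · rw [Complex.add_re, real_smul_re, real_smul_re, cw_re, cw_re, cw_re]
  · rw [Complex.add_im, real_smul_im, real_smul_im, cw_im, cw_im, cw_im]

end TreeAssembly

/-! ### Discrete Hex machinery -/

section Hex

inductive HDir : Type
  | E | N | W | S
deriving DecidableEq

open HDir

instance : Fintype HDir :=
  ⟨⟨{HDir.E, HDir.N, HDir.W, HDir.S}, by decide⟩, fun d => by cases d <;> decide⟩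

def HDir.vec : HDir → ℤ × ℤ
  | .E => (1, 0)
  | .N => (0, 1)
  | .W => (-1, 0)
  | .S => (0, -1)

def HDir.rotR : HDir → HDir
  | .E => .S
  | .S => .W
  | .W => .N
  | .N => .E

def HDir.rotL : HDir → HDir
  | .E => .N
  | .N => .W
  | .W => .S
  | .S => .E

/-- Left cell of the directed edge from `v` to `v + d.vec`. -/
def Lcell (v : ℤ × ℤ) : HDir → ℤ × ℤ
  | .E => (v.1, v.2)
  | .N => (v.1 - 1, v.2)
  | .W => (v.1 - 1, v.2 - 1)
  | .S => (v.1, v.2 - 1)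

/-- Right cell of the directed edge from `v` to `v + d.vec`. -/
def Rcell (v : ℤ × ℤ) : HDir → ℤ × ℤ
  | .E => (v.1, v.2 - 1)
  | .N => (v.1, v.2)
  | .W => (v.1 - 1, v.2)
  | .S => (v.1 - 1, v.2 - 1)

/-- The augmented colouring: white rows below and above, black walls left and right,
the given colouring `c` on the board `[0,Nb) × [0,Nb)`. -/
def hcol (c : ℤ → ℤ → Bool) (Nb : ℤ) (p : ℤ × ℤ) : Option Bool :=
  if (p.2 = -1 ∨ p.2 = Nb) ∧ -1 ≤ p.1 ∧ p.1 ≤ Nb then some false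
  else if (p.1 = -1 ∨ p.1 = Nb) ∧ 0 ≤ p.2 ∧ p.2 < Nb then some true
  else if 0 ≤ p.1 ∧ p.1 < Nb ∧ 0 ≤ p.2 ∧ p.2 < Nb then some (c p.1 p.2)
  else none

lemma hcol_true_cases {c : ℤ → ℤ → Bool} {Nb : ℤ} {p : ℤ × ℤ}
    (h : hcol c Nb p = some true) :
    ((p.1 = -1 ∨ p.1 = Nb) ∧ 0 ≤ p.2 ∧ p.2 < Nb) ∨
      (0 ≤ p.1 ∧ p.1 < Nb ∧ 0 ≤ p.2 ∧ p.2 < Nb ∧ c p.1 p.2 = true) := by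
  unfold hcol at h
  split_ifs at h with h1 h2 h3
  · simp at h
  · exact Or.inl h2
  · rw [Option.some.injEq] at h
    exact Or.inr ⟨h3.1, h3.2.1, h3.2.2.1, h3.2.2.2, h⟩

lemma hcol_false_cases {c : ℤ → ℤ → Bool} {Nb : ℤ} {p : ℤ × ℤ}
    (h : hcol c Nb p = some false) :
    ((p.2 = -1 ∨ p.2 = Nb) ∧ -1 ≤ p.1 ∧ p.1 ≤ Nb) ∨
      (0 ≤ p.1 ∧ p.1 < Nb ∧ 0 ≤ p.2 ∧ p.2 < Nb ∧ c p.1 p.2 = false) := by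
  unfold hcol at h
  split_ifs at h with h1 h2 h3
  · exact Or.inl h1
  · simp at h
  · rw [Option.some.injEq] at h
    exact Or.inr ⟨h3.1, h3.2.1, h3.2.2.1, h3.2.2.2, h⟩

lemma hcol_isSome_bounds {c : ℤ → ℤ → Bool} {Nb : ℤ} {p : ℤ × ℤ} {b : Bool}
    (h : hcol c Nb p = some b) :
    -1 ≤ p.1 ∧ p.1 ≤ Nb ∧ -1 ≤ p.2 ∧ p.2 ≤ Nb := by
  unfold hcol at h
  split_ifs at h with h1 h2 h3 <;> first | omega | simp at h

lemma hcol_none_of {c : ℤ → ℤ → Bool} {Nb : ℤ} {p : ℤ × ℤ}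
    (h : p.1 < -1 ∨ Nb < p.1 ∨ p.2 < -1 ∨ Nb < p.2) : hcol c Nb p = none := by
  unfold hcol
  split_ifs with h1 h2 h3 <;> first | omega | rfl

/-- The walk state: a directed edge, recorded as (tail vertex, direction). -/
abbrev HState := (ℤ × ℤ) × HDir

def okS (c : ℤ → ℤ → Bool) (Nb : ℤ) (s : HState) : Prop :=
  hcol c Nb (Lcell s.1 s.2) = some true ∧ hcol c Nb (Rcell s.1 s.2) = some false

def hsucc (c : ℤ → ℤ → Bool) (Nb : ℤ) (s : HState) : Option HState :=
  if hcol c Nb (Rcell (s.1 + s.2.vec) s.2) = some true then some (s.1 + s.2.vec, s.2.rotR)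
  else if hcol c Nb (Rcell (s.1 + s.2.vec) s.2) = some false then
    (if hcol c Nb (Lcell (s.1 + s.2.vec) s.2) = some true then some (s.1 + s.2.vec, s.2)
     else if hcol c Nb (Lcell (s.1 + s.2.vec) s.2) = some false then
       some (s.1 + s.2.vec, s.2.rotL)
     else none)
  else none

def hpred (c : ℤ → ℤ → Bool) (Nb : ℤ) (t : HState) : Option HState :=
  if hcol c Nb (Rcell (t.1 - t.2.vec) t.2) = some true then
    some (t.1 - (t.2.rotL).vec, t.2.rotL)
  else if hcol c Nb (Rcell (t.1 - t.2.vec) t.2) = some false then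
    (if hcol c Nb (Lcell (t.1 - t.2.vec) t.2) = some true then some (t.1 - t.2.vec, t.2)
     else if hcol c Nb (Lcell (t.1 - t.2.vec) t.2) = some false then
       some (t.1 - (t.2.rotR).vec, t.2.rotR)
     else none)
  else none

/-! Geometric identities for the cells around a vertex. -/

lemma cell_id_rotR_L (v : ℤ × ℤ) (d : HDir) :
    Lcell (v + d.vec) d.rotR = Rcell (v + d.vec) d := by
  cases d <;> rfl

lemma cell_id_rotR_R (v : ℤ × ℤ) (d : HDir) :
    Rcell (v + d.vec) d.rotR = Rcell v d := by
  cases d <;> simp [Lcell, Rcell, HDir.rotR, HDir.rotL, HDir.vec, Prod.ext_iff, Prod.fst_add, Prod.snd_add, Prod.fst_sub, Prod.snd_sub] <;> omega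

lemma cell_id_rotL_L (v : ℤ × ℤ) (d : HDir) :
    Lcell (v + d.vec) d.rotL = Lcell v d := by
  cases d <;> simp [Lcell, Rcell, HDir.rotR, HDir.rotL, HDir.vec, Prod.ext_iff, Prod.fst_add, Prod.snd_add, Prod.fst_sub, Prod.snd_sub] <;> omega

lemma cell_id_rotL_R (v : ℤ × ℤ) (d : HDir) :
    Rcell (v + d.vec) d.rotL = Lcell (v + d.vec) d := by
  cases d <;> rfl

lemma cell_id_back_R (v : ℤ × ℤ) (d : HDir) :
    Rcell ((v + d.vec) - (d.rotR).vec) d.rotR = Lcell v d := by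
  cases d <;> simp [Lcell, Rcell, HDir.rotR, HDir.rotL, HDir.vec, Prod.ext_iff, Prod.fst_add, Prod.snd_add, Prod.fst_sub, Prod.snd_sub] <;> omega

lemma cell_id_back_L (v : ℤ × ℤ) (d : HDir) :
    Lcell ((v + d.vec) - (d.rotL).vec) d.rotL = Rcell v d := by
  cases d <;> simp [Lcell, Rcell, HDir.rotR, HDir.rotL, HDir.vec, Prod.ext_iff, Prod.fst_add, Prod.snd_add, Prod.fst_sub, Prod.snd_sub] <;> omega

lemma cell_id_back_R' (v : ℤ × ℤ) (d : HDir) :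
    Rcell ((v + d.vec) - (d.rotL).vec) d.rotL = Rcell (v + d.vec) d := by
  cases d <;> simp [Lcell, Rcell, HDir.rotR, HDir.rotL, HDir.vec, Prod.ext_iff, Prod.fst_add, Prod.snd_add, Prod.fst_sub, Prod.snd_sub] <;> omega

lemma rotL_rotR (d : HDir) : d.rotR.rotL = d := by
  cases d <;> rfl

lemma rotR_rotL (d : HDir) : d.rotL.rotR = d := by
  cases d <;> rfl

lemma tail_id (v : ℤ × ℤ) (d : HDir) : (v + d.vec) - d.vec = v := by
  cases d <;> simp [HDir.vec, Prod.ext_iff, Prod.fst_add, Prod.snd_add, Prod.fst_sub, Prod.snd_sub] <;> omega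

lemma tail_id_rotL (v : ℤ × ℤ) (d : HDir) :
    (v + d.vec) - (d.rotR.rotL).vec = v := by
  rw [rotL_rotR, tail_id]

lemma hcol_none_bounds {c : ℤ → ℤ → Bool} {Nb : ℤ} {p : ℤ × ℤ}
    (h : hcol c Nb p = none) : p.1 < -1 ∨ Nb < p.1 ∨ p.2 < -1 ∨ Nb < p.2 := by
  unfold hcol at h
  split_ifs at h with h1 h2 h3 <;> first | omega | simp at h

lemma hsucc_ok {c : ℤ → ℤ → Bool} {Nb : ℤ} {s t : HState}
    (hs : okS c Nb s) (h : hsucc c Nb s = some t) : okS c Nb t := by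
  obtain ⟨hL, hR⟩ := hs
  unfold hsucc at h
  split_ifs at h with h1 h2 h3 h4 <;> rw [Option.some.injEq] at h <;> subst h
  · exact ⟨by rw [cell_id_rotR_L]; exact h1, by rw [cell_id_rotR_R]; exact hR⟩
  · exact ⟨h3, h2⟩
  · exact ⟨by rw [cell_id_rotL_L]; exact hL, by rw [cell_id_rotL_R]; exact h4⟩

lemma hpred_hsucc {c : ℤ → ℤ → Bool} {Nb : ℤ} {s t : HState}
    (hs : okS c Nb s) (h : hsucc c Nb s = some t) : hpred c Nb t = some s := by
  obtain ⟨hL, hR⟩ := hs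
  unfold hsucc at h
  split_ifs at h with h1 h2 h3 h4 <;> rw [Option.some.injEq] at h <;> subst h <;>
    unfold hpred <;> dsimp only
  · rw [cell_id_back_R, if_pos hL, rotL_rotR, tail_id]
  · rw [tail_id, if_neg (by rw [hR]; simp), if_pos hR, if_pos hL]
  · rw [cell_id_back_R', if_neg (by rw [h2]; simp), if_pos h2, cell_id_back_L,
      if_neg (by rw [hR]; simp), if_pos hR, rotR_rotL, tail_id]

/-- The start state: the edge from `(-1,0)` to `(0,0)`, pointing east, with the
black left wall on its left and the white bottom row on its right. -/
def hstart : HState := ((-1, 0), HDir.E)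

lemma hstart_ok {c : ℤ → ℤ → Bool} {Nb : ℤ} (hNb : 1 ≤ Nb) : okS c Nb hstart := by
  constructor
  · show hcol c Nb (-1, 0) = some true
    unfold hcol
    rw [if_neg (by omega), if_pos (by omega)]
  · show hcol c Nb (-1, -1) = some false
    unfold hcol
    rw [if_pos (by omega)]

lemma hpred_hstart {c : ℤ → ℤ → Bool} {Nb : ℤ} : hpred c Nb hstart = none := by
  unfold hpred hstart
  have hnone : hcol c Nb (Rcell (((-1:ℤ), (0:ℤ)) - HDir.E.vec) HDir.E) = none := by
    apply hcol_none_of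
    left
    decide
  rw [if_neg (by rw [hnone]; simp), if_neg (by rw [hnone]; simp)]

lemma no_pred_of_start {c : ℤ → ℤ → Bool} {Nb : ℤ} {s : HState}
    (hs : okS c Nb s) : hsucc c Nb s ≠ some hstart := by
  intro h
  have := hpred_hsucc hs h
  rw [hpred_hstart] at this
  simp at this

lemma hstate_bounds {c : ℤ → ℤ → Bool} {Nb : ℤ} {s : HState}
    (hs : okS c Nb s) : -1 ≤ s.1.1 ∧ s.1.1 ≤ Nb + 1 ∧ -1 ≤ s.1.2 ∧ s.1.2 ≤ Nb + 1 := by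
  obtain ⟨hL, _⟩ := hs
  have := hcol_isSome_bounds hL
  obtain ⟨v, d⟩ := s
  cases d <;> simp only [Lcell] at this <;> dsimp only at * <;> omega

lemma terminal_cases {c : ℤ → ℤ → Bool} {Nb : ℤ} (hNb : 1 ≤ Nb) {t : HState}
    (ht : okS c Nb t) (h : hsucc c Nb t = none) :
    t = ((Nb, 0), HDir.E) ∨ t = ((0, Nb), HDir.W) := by
  obtain ⟨hL, hR⟩ := ht
  obtain ⟨v, d⟩ := t
  have hLb := hcol_isSome_bounds hL
  have hRb := hcol_isSome_bounds hR
  unfold hsucc at h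
  split_ifs at h with h1 h2 h3 h4 <;> try simp at h
  · -- FR = some false, FL = none
    have hFL : hcol c Nb (Lcell ((v, d).1 + (v, d).2.vec) (v, d).2) = none := by
      rcases hh : hcol c Nb (Lcell ((v, d).1 + (v, d).2.vec) (v, d).2) with _ | b
      · rfl
      · cases b
        · exact absurd hh h4
        · exact absurd hh h3
    have hFLb := hcol_none_bounds hFL
    clear h h1 h2 h3 h4 hFL
    cases d
    · left
      simp only [Lcell, Rcell, HDir.vec, Prod.fst_add, Prod.snd_add] at hFLb hLb hRb hL hR ⊢
      have hv1 : v.1 = Nb := by omega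
      rcases hcol_true_cases hL with ⟨hw, hy⟩ | hb
      · rcases hcol_false_cases hR with ⟨hw2, _⟩ | hb2
        · simp only [Prod.ext_iff, Prod.mk.injEq]
          refine ⟨⟨hv1, ?_⟩, trivial⟩
          omega
        · exfalso
          omega
      · exfalso
        omega
    · exfalso
      simp only [Lcell, Rcell, HDir.vec, Prod.fst_add, Prod.snd_add] at hFLb hLb hRb hL hR
      rcases hcol_true_cases hL with ⟨_, hy⟩ | hb
      · omega
      · omega
    · right
      simp only [Lcell, Rcell, HDir.vec, Prod.fst_add, Prod.snd_add] at hFLb hLb hRb hL hR ⊢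
      have hv1 : v.1 = 0 := by omega
      rcases hcol_true_cases hL with ⟨hw, hy⟩ | hb
      · rcases hcol_false_cases hR with ⟨hw2, _⟩ | hb2
        · simp only [Prod.ext_iff, Prod.mk.injEq]
          refine ⟨⟨hv1, ?_⟩, trivial⟩
          omega
        · exfalso
          omega
      · exfalso
        omega
    · exfalso
      simp only [Lcell, Rcell, HDir.vec, Prod.fst_add, Prod.snd_add] at hFLb hLb hRb hL hR
      rcases hcol_true_cases hL with ⟨_, hy⟩ | hb
      · omega
      · omega
  · -- FR = none
    have hFR : hcol c Nb (Rcell ((v, d).1 + (v, d).2.vec) (v, d).2) = none := by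
      rcases hh : hcol c Nb (Rcell ((v, d).1 + (v, d).2.vec) (v, d).2) with _ | b
      · rfl
      · cases b
        · exact absurd hh h2
        · exact absurd hh h1
    have hFRb := hcol_none_bounds hFR
    clear h h1 h2 hFR
    cases d
    · left
      simp only [Lcell, Rcell, HDir.vec, Prod.fst_add, Prod.snd_add] at hFRb hLb hRb hL hR ⊢
      have hv1 : v.1 = Nb := by omega
      rcases hcol_true_cases hL with ⟨hw, hy⟩ | hb
      · rcases hcol_false_cases hR with ⟨hw2, _⟩ | hb2
        · simp only [Prod.ext_iff, Prod.mk.injEq]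
          refine ⟨⟨hv1, ?_⟩, trivial⟩
          omega
        · exfalso
          omega
      · exfalso
        omega
    · exfalso
      simp only [Lcell, Rcell, HDir.vec, Prod.fst_add, Prod.snd_add] at hFRb hLb hRb hL hR
      rcases hcol_true_cases hL with ⟨_, hy⟩ | hb
      · omega
      · omega
    · right
      simp only [Lcell, Rcell, HDir.vec, Prod.fst_add, Prod.snd_add] at hFRb hLb hRb hL hR ⊢
      have hv1 : v.1 = 0 := by omega
      rcases hcol_true_cases hL with ⟨hw, hy⟩ | hb
      · rcases hcol_false_cases hR with ⟨hw2, _⟩ | hb2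
        · simp only [Prod.ext_iff, Prod.mk.injEq]
          refine ⟨⟨hv1, ?_⟩, trivial⟩
          omega
        · exfalso
          omega
      · exfalso
        omega
    · exfalso
      simp only [Lcell, Rcell, HDir.vec, Prod.fst_add, Prod.snd_add] at hFRb hLb hRb hL hR
      rcases hcol_true_cases hL with ⟨_, hy⟩ | hb
      · omega
      · omega

lemma hsucc_L_adj {c : ℤ → ℤ → Bool} {Nb : ℤ} {s t : HState}
    (h : hsucc c Nb s = some t) :
    |(Lcell t.1 t.2).1 - (Lcell s.1 s.2).1| ≤ 1 ∧
      |(Lcell t.1 t.2).2 - (Lcell s.1 s.2).2| ≤ 1 := by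
  obtain ⟨v, d⟩ := s
  unfold hsucc at h
  split_ifs at h with h1 h2 h3 h4 <;> rw [Option.some.injEq] at h <;> subst h <;>
    cases d <;>
    simp only [Lcell, Rcell, HDir.vec, HDir.rotR, HDir.rotL, Prod.fst_add, Prod.snd_add,
      abs_le] <;> omega

lemma hsucc_R_adj {c : ℤ → ℤ → Bool} {Nb : ℤ} {s t : HState}
    (h : hsucc c Nb s = some t) :
    |(Rcell t.1 t.2).1 - (Rcell s.1 s.2).1| ≤ 1 ∧
      |(Rcell t.1 t.2).2 - (Rcell s.1 s.2).2| ≤ 1 := by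
  obtain ⟨v, d⟩ := s
  unfold hsucc at h
  split_ifs at h with h1 h2 h3 h4 <;> rw [Option.some.injEq] at h <;> subst h <;>
    cases d <;>
    simp only [Lcell, Rcell, HDir.vec, HDir.rotR, HDir.rotL, Prod.fst_add, Prod.snd_add,
      abs_le] <;> omega

/-! #### The walk -/

def walkF (c : ℤ → ℤ → Bool) (Nb : ℤ) : ℕ → Option HState
  | 0 => some hstart
  | n+1 => (walkF c Nb n).bind (hsucc c Nb)

lemma walkF_ok {c : ℤ → ℤ → Bool} {Nb : ℤ} (hNb : 1 ≤ Nb) :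
    ∀ n s, walkF c Nb n = some s → okS c Nb s := by
  intro n
  induction n with
  | zero =>
    intro s hs
    rw [walkF, Option.some.injEq] at hs
    subst hs
    exact hstart_ok hNb
  | succ k ih =>
    intro s hs
    rw [walkF] at hs
    rcases hw : walkF c Nb k with _ | u
    · rw [hw] at hs
      simp at hs
    · rw [hw] at hs
      exact hsucc_ok (ih u hw) hs

lemma walkF_inj {c : ℤ → ℤ → Bool} {Nb : ℤ} (hNb : 1 ≤ Nb) :
    ∀ i j s, walkF c Nb i = some s → walkF c Nb j = some s → i = j := by
  intro i
  induction i with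
  | zero =>
    intro j s h0 hj
    cases j with
    | zero => rfl
    | succ j' =>
      exfalso
      rw [walkF, Option.some.injEq] at h0
      rw [walkF] at hj
      rcases hw : walkF c Nb j' with _ | u
      · rw [hw] at hj
        simp at hj
      · rw [hw] at hj
        rw [← h0] at hj
        exact no_pred_of_start (walkF_ok hNb j' u hw) hj
  | succ i' ih =>
    intro j s hi hj
    cases j with
    | zero =>
      exfalso
      rw [walkF, Option.some.injEq] at hj
      rw [walkF] at hi
      rcases hw : walkF c Nb i' with _ | u
      · rw [hw] at hi
        simp at hi
      · rw [hw] at hi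
        rw [← hj] at hi
        exact no_pred_of_start (walkF_ok hNb i' u hw) hi
    | succ j' =>
      rw [walkF] at hi hj
      rcases hwi : walkF c Nb i' with _ | u
      · rw [hwi] at hi
        simp at hi
      rcases hwj : walkF c Nb j' with _ | u'
      · rw [hwj] at hj
        simp at hj
      rw [hwi] at hi
      rw [hwj] at hj
      have hu := hpred_hsucc (walkF_ok hNb i' u hwi) hi
      have hu' := hpred_hsucc (walkF_ok hNb j' u' hwj) hj
      rw [hu, Option.some.injEq] at hu'
      rw [← hu'] at hwj
      rw [ih j' u hwi hwj]

lemma walk_terminates (c : ℤ → ℤ → Bool) (Nb : ℤ) (hNb : 1 ≤ Nb) :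
    ∃ n t, walkF c Nb n = some t ∧ hsucc c Nb t = none := by
  classical
  by_contra hcon
  push_neg at hcon
  have hall : ∀ n, ∃ t, walkF c Nb n = some t := by
    intro n
    induction n with
    | zero => exact ⟨hstart, rfl⟩
    | succ k ih =>
      obtain ⟨t, ht⟩ := ih
      have hne := hcon k t ht
      rcases hs : hsucc c Nb t with _ | t'
      · exact absurd hs hne
      · refine ⟨t', ?_⟩
        rw [walkF, ht]
        exact hs
  set box : Finset HState :=
    ((Finset.Icc (-1 : ℤ) (Nb+1)) ×ˢ (Finset.Icc (-1:ℤ) (Nb+1))) ×ˢ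
      (Finset.univ : Finset HDir) with hbox
  choose f hf using hall
  have hinj : Function.Injective f := by
    intro a b hab
    exact walkF_inj hNb a b (f a) (hf a) (hab ▸ hf b)
  have hmem : ∀ n, f n ∈ box := by
    intro n
    have hok := walkF_ok hNb n (f n) (hf n)
    have hb := hstate_bounds hok
    rw [hbox]
    refine Finset.mem_product.mpr ⟨Finset.mem_product.mpr ⟨?_, ?_⟩, Finset.mem_univ _⟩ <;>
      rw [Finset.mem_Icc] <;> constructor <;> omega
  have hcard := Finset.exists_ne_map_eq_of_card_lt_of_maps_to
    (s := Finset.range (box.card + 1)) (t := box)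
    (by rw [Finset.card_range]; omega) (fun n _ => hmem n)
  obtain ⟨a, ha, b, hb, hne, heq⟩ := hcard
  exact hne (hinj heq)

lemma extract_crossing (q : ℕ → ℤ) (n : ℕ) (B : ℤ) (hB : 1 ≤ B)
    (h0 : q 0 = -1) (hn : q n = B)
    (hadj : ∀ j, j < n → q (j+1) ≤ q j + 1 ∧ q j - 1 ≤ q (j+1)) :
    ∃ a b : ℕ, a ≤ b ∧ b ≤ n ∧ q a = 0 ∧ q b = B - 1 ∧
      ∀ j, a ≤ j → j ≤ b → 0 ≤ q j ∧ q j < B := by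
  classical
  have hex : ∃ j, j ≤ n ∧ B ≤ q j := ⟨n, le_refl n, le_of_eq hn.symm⟩
  set j1 := Nat.find hex with hj1
  obtain ⟨hj1n, hj1B⟩ := Nat.find_spec hex
  rw [← hj1] at hj1n hj1B
  have hlt : ∀ j, j < j1 → q j < B := by
    intro j hj
    have hmin := Nat.find_min hex hj
    push_neg at hmin
    by_contra hc
    push_neg at hc
    have := hmin (by omega)
    omega
  have hj1pos : 0 < j1 := by
    rcases Nat.eq_zero_or_pos j1 with h | h
    · exfalso
      rw [h, h0] at hj1B
      omega
    · exact h
  have hex2P : q 0 < 0 := by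
    rw [h0]
    norm_num
  set a' := Nat.findGreatest (fun i => q i < 0) (j1 - 1) with ha'
  have hPa' : q a' < 0 := by
    have := Nat.findGreatest_spec (P := fun i => q i < 0) (n := j1 - 1) (m := 0)
      (by omega) hex2P
    simpa [← ha'] using this
  have ha'le : a' ≤ j1 - 1 := by
    rw [ha']
    exact Nat.findGreatest_le _
  have hpos : ∀ j, a' < j → j ≤ j1 - 1 → 0 ≤ q j := by
    intro j h1 h2
    by_contra hc
    push_neg at hc
    rw [ha'] at h1
    exact Nat.findGreatest_is_greatest (P := fun i => q i < 0) h1 h2 hc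
  have hstep_a : q (a'+1) ≤ q a' + 1 := (hadj a' (by omega)).1
  have ha1 : a' + 1 ≤ j1 - 1 := by
    by_contra hc
    push_neg at hc
    have heq : a' = j1 - 1 := by omega
    have hadj2 := (hadj (j1 - 1) (by omega)).1
    have hj1e : j1 - 1 + 1 = j1 := by omega
    rw [hj1e] at hadj2
    rw [← heq] at hadj2
    omega
  have hqa1 : q (a'+1) = 0 := le_antisymm (by omega) (hpos (a'+1) (by omega) ha1)
  have hqb : q (j1 - 1) = B - 1 := by
    have h1 := (hadj (j1-1) (by omega)).1
    have hj1e : j1 - 1 + 1 = j1 := by omega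
    rw [hj1e] at h1
    have h2 := hlt (j1-1) (by omega)
    have h3 := hpos (j1-1) (by omega) (le_refl _)
    omega
  refine ⟨a'+1, j1-1, ha1, by omega, hqa1, hqb, ?_⟩
  intro j hja hjb
  exact ⟨hpos j (by omega) hjb, hlt j (by omega)⟩

set_option maxHeartbeats 800000 in
lemma hex_crossing (Nb : ℤ) (hNb : 1 ≤ Nb) (c : ℤ → ℤ → Bool) :
    ∃ (M : ℕ) (p : ℕ → ℤ × ℤ) (bl : Bool),
      (∀ j, j ≤ M → (0 ≤ (p j).1 ∧ (p j).1 < Nb ∧ 0 ≤ (p j).2 ∧ (p j).2 < Nb) ∧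
        c (p j).1 (p j).2 = bl) ∧
      (∀ j, j < M → |(p (j+1)).1 - (p j).1| ≤ 1 ∧ |(p (j+1)).2 - (p j).2| ≤ 1) ∧
      ((bl = true ∧ (p 0).1 = 0 ∧ (p M).1 = Nb - 1) ∨
       (bl = false ∧ (p 0).2 = 0 ∧ (p M).2 = Nb - 1)) := by
  classical
  obtain ⟨n, t, hwn, hterm⟩ := walk_terminates c Nb hNb
  have hmono : ∀ j k, j ≤ k → walkF c Nb j = none → walkF c Nb k = none := by
    intro j k hjk hnone
    induction k with
    | zero =>
      rw [Nat.le_zero] at hjk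
      rw [← hjk]
      exact hnone
    | succ m ih =>
      rcases Nat.lt_or_ge j (m+1) with h | h
      · have hm := ih (by omega)
        rw [walkF, hm]
        rfl
      · have : j = m + 1 := by omega
        rw [← this]
        exact hnone
  have hst : ∀ j, j ≤ n → ∃ s, walkF c Nb j = some s := by
    intro j hj
    rcases hw : walkF c Nb j with _ | s
    · exfalso
      have := hmono j n hj hw
      rw [hwn] at this
      simp at this
    · exact ⟨s, rfl⟩
  have hchoice : ∀ j : ℕ, ∃ s : HState, (j ≤ n → walkF c Nb j = some s) := by
    intro j
    by_cases hj : j ≤ n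
    · obtain ⟨s, hs⟩ := hst j hj
      exact ⟨s, fun _ => hs⟩
    · exact ⟨hstart, fun h => absurd h hj⟩
  choose st hstp using hchoice
  have hok : ∀ j, j ≤ n → okS c Nb (st j) := fun j hj => walkF_ok hNb j (st j) (hstp j hj)
  have hstep : ∀ j, j < n → hsucc c Nb (st j) = some (st (j+1)) := by
    intro j hj
    have h1 := hstp j (by omega)
    have h2 := hstp (j+1) (by omega)
    rw [walkF, h1] at h2
    exact h2
  have hst0 : st 0 = hstart := by
    have h := hstp 0 (by omega)
    rw [walkF, Option.some.injEq] at h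
    exact h.symm
  have hstn : st n = t := by
    have h := hstp n (le_refl n)
    rw [hwn, Option.some.injEq] at h
    exact h.symm
  have htermn : hsucc c Nb (st n) = none := by
    rw [hstn]
    exact hterm
  rcases terminal_cases hNb (hok n (le_refl n)) htermn with hSE | hNW
  · -- black left-right crossing
    set q1 : ℕ → ℤ := fun j => (Lcell (st j).1 (st j).2).1 with hq1
    have hq10 : q1 0 = -1 := by
      rw [hq1]
      simp only [hst0]
      rfl
    have hq1n : q1 n = Nb := by
      rw [hq1]
      simp only [hSE]
      rfl
    have hadj1 : ∀ j, j < n → q1 (j+1) ≤ q1 j + 1 ∧ q1 j - 1 ≤ q1 (j+1) := by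
      intro j hj
      obtain ⟨h1, _⟩ := hsucc_L_adj (hstep j hj)
      rw [abs_le] at h1
      constructor <;> simp only [hq1] <;> omega
    obtain ⟨a, b, hab, hbn, hqa, hqb, hint⟩ := extract_crossing q1 n Nb hNb hq10 hq1n hadj1
    refine ⟨b - a, fun j => Lcell (st (a+j)).1 (st (a+j)).2, true, ?_, ?_,
      Or.inl ⟨rfl, ?_, ?_⟩⟩
    · intro j hj
      have hx := hint (a+j) (by omega) (by omega)
      simp only [hq1] at hx
      have hokj := hok (a+j) (by omega)
      have hLtrue := hokj.1
      rcases hcol_true_cases hLtrue with ⟨hw, hy⟩ | ⟨hb1, hb2, hb3, hb4, hb5⟩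
      · exfalso
        rcases hw with h | h <;> omega
      · exact ⟨⟨hb1, hb2, hb3, hb4⟩, hb5⟩
    · intro j hj
      have hadjj := hsucc_L_adj (hstep (a+j) (by omega))
      have he : a + (j+1) = (a+j) + 1 := by omega
      simp only [he]
      exact hadjj
    · have he : a + 0 = a := by omega
      simp only [he]
      exact hqa
    · have he : a + (b - a) = b := by omega
      simp only [he]
      exact hqb
  · -- white bottom-top crossing
    set q2 : ℕ → ℤ := fun j => (Rcell (st j).1 (st j).2).2 with hq2
    have hq20 : q2 0 = -1 := by
      rw [hq2]
      simp only [hst0]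
      rfl
    have hq2n : q2 n = Nb := by
      rw [hq2]
      simp only [hNW]
      rfl
    have hadj2 : ∀ j, j < n → q2 (j+1) ≤ q2 j + 1 ∧ q2 j - 1 ≤ q2 (j+1) := by
      intro j hj
      obtain ⟨_, h2⟩ := hsucc_R_adj (hstep j hj)
      rw [abs_le] at h2
      constructor <;> simp only [hq2] <;> omega
    obtain ⟨a, b, hab, hbn, hqa, hqb, hint⟩ := extract_crossing q2 n Nb hNb hq20 hq2n hadj2
    refine ⟨b - a, fun j => Rcell (st (a+j)).1 (st (a+j)).2, false, ?_, ?_,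
      Or.inr ⟨rfl, ?_, ?_⟩⟩
    · intro j hj
      have hx := hint (a+j) (by omega) (by omega)
      simp only [hq2] at hx
      have hokj := hok (a+j) (by omega)
      have hRfalse := hokj.2
      rcases hcol_false_cases hRfalse with ⟨hw, hy⟩ | ⟨hb1, hb2, hb3, hb4, hb5⟩
      · exfalso
        rcases hw with h | h <;> omega
      · exact ⟨⟨hb1, hb2, hb3, hb4⟩, hb5⟩
    · intro j hj
      have hadjj := hsucc_R_adj (hstep (a+j) (by omega))
      have he : a + (j+1) = (a+j) + 1 := by omega
      simp only [he]
      exact hadjj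
    · have he : a + 0 = a := by omega
      simp only [he]
      exact hqa
    · have he : a + (b - a) = b := by omega
      simp only [he]
      exact hqb

end Hex

lemma gridpt_mem {Nb x y : ℤ} (hNb : 1 ≤ Nb) (h : 0 ≤ x ∧ x < Nb ∧ 0 ≤ y ∧ y < Nb) :
    cw ((Nb:ℝ) + x) (1 + y) ∈ Xtree := by
  obtain ⟨m, hm⟩ : ∃ m : ℕ, y = (m:ℤ) := ⟨y.toNat, (Int.toNat_of_nonneg h.2.2.1).symm⟩
  have h3 : ((m:ℕ):ℝ) = ((y:ℤ):ℝ) := by exact_mod_cast hm.symm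
  apply mem_Xtree_A (k := m + 1) (by omega)
  · rw [cw_im]
    push_cast
    linarith
  · rw [cw_re]
    have h1 : (y:ℝ) + 1 ≤ (Nb:ℝ) := by exact_mod_cast h.2.2.2
    have h2 : (0:ℝ) ≤ (x:ℝ) := by exact_mod_cast h.1
    push_cast
    linarith

set_option maxHeartbeats 1000000 in
lemma not_asdimLE_Xtree_one : ¬ ASDimLE Xtree 1 := by
  classical
  intro h1
  obtain ⟨𝒰, hub, hdisj, hcov⟩ := h1 3 (by norm_num)
  obtain ⟨S0, hS0⟩ := hub 0
  obtain ⟨S1, hS1⟩ := hub 1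
  set S : ℝ := max S0 S1 with hS
  set Nb : ℤ := (⌈S⌉₊ : ℤ) + 5 with hNbdef
  have hNb1 : 1 ≤ Nb := by
    have : (0:ℤ) ≤ (⌈S⌉₊ : ℤ) := Int.natCast_nonneg _
    omega
  have hNbS : S + 1 < (Nb:ℝ) - 1 := by
    have hceil := Nat.le_ceil S
    have hcast : ((⌈S⌉₊ : ℤ) : ℝ) = ((⌈S⌉₊ : ℕ) : ℝ) := by push_cast; ring
    rw [hNbdef]
    push_cast
    linarith
  have hmemg : ∀ x y : ℤ, (0 ≤ x ∧ x < Nb ∧ 0 ≤ y ∧ y < Nb) →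
      cw ((Nb:ℝ) + x) (1 + y) ∈ Xtree := fun x y h => gridpt_mem hNb1 h
  set c : ℤ → ℤ → Bool := fun x y =>
    if h : 0 ≤ x ∧ x < Nb ∧ 0 ≤ y ∧ y < Nb then
      decide (∃ U ∈ 𝒰 0, (⟨cw ((Nb:ℝ) + x) (1 + y), hmemg x y h⟩ : Xtree) ∈ U)
    else true
    with hcdef
  obtain ⟨M, p, bl, hcell, hadj, hcross⟩ := hex_crossing Nb hNb1 c
  set pt : ℕ → Xtree := fun j => ⟨cw ((Nb:ℝ) + (p (min j M)).1) (1 + (p (min j M)).2),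
    hmemg _ _ (hcell (min j M) (min_le_right _ _)).1⟩ with hptdef
  have hptval : ∀ j, j ≤ M → ((pt j : Xtree) : ℂ) = cw ((Nb:ℝ) + (p j).1) (1 + (p j).2) := by
    intro j hj
    rw [hptdef]
    simp only [Nat.min_eq_left hj]
  -- the colour of each cell on the path decides which family contains its point
  have hkey : ∀ j, j ≤ M →
      (bl = true → ∃ U ∈ 𝒰 0, pt j ∈ U) ∧ (bl = false → ∃ U ∈ 𝒰 1, pt j ∈ U) := by
    intro j hj
    obtain ⟨hbnd, hcol⟩ := hcell j hj
    have hcval : c (p j).1 (p j).2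
        = decide (∃ U ∈ 𝒰 0, (⟨cw ((Nb:ℝ) + (p j).1) (1 + (p j).2),
            hmemg _ _ hbnd⟩ : Xtree) ∈ U) := by
      rw [hcdef]
      simp only [dif_pos hbnd]
    have hpteq : (⟨cw ((Nb:ℝ) + (p j).1) (1 + (p j).2), hmemg _ _ hbnd⟩ : Xtree) = pt j := by
      apply Subtype.ext
      rw [hptval j hj]
    constructor
    · intro hbl
      rw [hbl, hcval] at hcol
      rw [← hpteq]
      exact of_decide_eq_true hcol
    · intro hbl
      rw [hbl, hcval] at hcol
      have hnot : ¬ ∃ U ∈ 𝒰 0, pt j ∈ U := by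
        rw [← hpteq]
        exact of_decide_eq_false hcol
      obtain ⟨i, U, hU, hmU⟩ := hcov (pt j)
      fin_cases i
      · exact absurd ⟨U, hU, hmU⟩ hnot
      · exact ⟨U, hU, hmU⟩
  have hfam : ∃ i : Fin 2, ∀ j, j ≤ M → ∃ U ∈ 𝒰 i, pt j ∈ U := by
    cases bl
    · exact ⟨1, fun j hj => (hkey j hj).2 rfl⟩
    · exact ⟨0, fun j hj => (hkey j hj).1 rfl⟩
  -- adjacent points are at distance ≤ 2
  have hB : ∀ j, j < M → dist (pt j) (pt (j+1)) ≤ 2 := by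
    intro j hj
    obtain ⟨hx, hy⟩ := hadj j hj
    rw [Subtype.dist_eq, hptval j (by omega), hptval (j+1) (by omega)]
    refine le_trans (complex_dist_le _ _) ?_
    rw [cw_re, cw_re, cw_im, cw_im]
    have hex : ((Nb:ℝ) + (p j).1) - ((Nb:ℝ) + (p (j+1)).1) = (((p j).1 - (p (j+1)).1 : ℤ) : ℝ) := by
      push_cast
      ring
    have hey : (1 + ((p j).2 : ℝ)) - (1 + (p (j+1)).2) = (((p j).2 - (p (j+1)).2 : ℤ) : ℝ) := by
      push_cast
      ring
    rw [hex, hey, ← Int.cast_abs, ← Int.cast_abs]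
    have hx' : |(p j).1 - (p (j+1)).1| ≤ 1 := by
      rw [abs_sub_comm]
      exact hx
    have hy' : |(p j).2 - (p (j+1)).2| ≤ 1 := by
      rw [abs_sub_comm]
      exact hy
    have hx'' : ((|(p j).1 - (p (j+1)).1| : ℤ) : ℝ) ≤ ((1:ℤ):ℝ) := Int.cast_le.mpr hx'
    have hy'' : ((|(p j).2 - (p (j+1)).2| : ℤ) : ℝ) ≤ ((1:ℤ):ℝ) := Int.cast_le.mpr hy'
    rw [Int.cast_one] at hx'' hy''
    linarith
  -- all points lie in one member
  obtain ⟨ifam, hall⟩ := hfam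
  obtain ⟨U0, hU0, hm0⟩ := hall 0 (by omega)
  have hchain : ∀ j, j ≤ M → pt j ∈ U0 := by
    intro j
    induction j with
    | zero =>
      intro _
      exact hm0
    | succ k ih =>
      intro hk
      obtain ⟨V, hV, hmV⟩ := hall (k+1) hk
      by_cases hUV : V = U0
      · rw [hUV] at hmV
        exact hmV
      · exfalso
        have h3 := hdisj ifam U0 hU0 V hV (fun hh => hUV hh.symm) (pt k) (ih (by omega))
          (pt (k+1)) hmV
        have h4 := hB k (by omega)
        linarith
  -- uniform bound on the member
  have hSb : dist (pt 0) (pt M) ≤ S := by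
    fin_cases ifam
    · exact le_trans (hS0 U0 hU0 (pt 0) (hchain 0 (by omega)) (pt M) (hchain M (le_refl M)))
        (le_max_left _ _)
    · exact le_trans (hS1 U0 hU0 (pt 0) (hchain 0 (by omega)) (pt M) (hchain M (le_refl M)))
        (le_max_right _ _)
  -- but the endpoints are far apart
  have hfar : (Nb:ℝ) - 1 ≤ dist (pt 0) (pt M) := by
    rw [Subtype.dist_eq, hptval 0 (by omega), hptval M (le_refl M)]
    rcases hcross with ⟨_, he0, heM⟩ | ⟨_, he0, heM⟩
    · have h5 := complex_re_dist_le (cw ((Nb:ℝ) + (p 0).1) (1 + (p 0).2))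
        (cw ((Nb:ℝ) + (p M).1) (1 + (p M).2))
      rw [cw_re, cw_re] at h5
      have he : ((Nb:ℝ) + ((p 0).1:ℝ)) - ((Nb:ℝ) + ((p M).1:ℝ)) = -((Nb:ℝ) - 1) := by
        rw [he0, heM]
        push_cast
        ring
      rw [he, abs_neg] at h5
      refine le_trans ?_ h5
      exact le_abs_self _
    · have h5 := complex_im_dist_le (cw ((Nb:ℝ) + (p 0).1) (1 + (p 0).2))
        (cw ((Nb:ℝ) + (p M).1) (1 + (p M).2))
      rw [cw_im, cw_im] at h5
      have he : (1 + ((p 0).2:ℝ)) - (1 + ((p M).2:ℝ)) = -((Nb:ℝ) - 1) := by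
        rw [he0, heM]
        push_cast
        ring
      rw [he, abs_neg] at h5
      refine le_trans ?_ h5
      exact le_abs_self _
  linarith





lemma asdimLE_T_one (T : Type*) [MetricSpace T] (e : T ≃ Xtree)
    (hd : ∀ p q : T, ENNReal.ofReal (dist p q) = treePathDist (e p) (e q)) :
    ASDimLE T 1 := by
  intro R hR
  set N : ℝ := 8*(R+1) with hNval
  have hN : 0 < N := by
    rw [hNval]
    linarith
  refine ⟨fun i => (fun U : Set Xtree => e ⁻¹' U) '' famX N i, ?_, ?_, ?_⟩
  · intro i
    refine ⟨3*N, ?_⟩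
    rintro V ⟨U, hU, rfl⟩ x hx y hy
    have hx' : e x ∈ U := hx
    have hy' : e y ∈ U := hy
    have hb : treePathDist (e x) (e y) ≤ ENNReal.ofReal (3*N) := by
      rcases hU with ⟨n, _, rfl⟩ | ⟨K, m, _, _, rfl⟩
      · exact SPm_bound hN hx' hy'
      · exact RPm_bound hN hx' hy'
    exact dist_T_le e hd x y (by linarith) hb
  · intro i
    rintro V ⟨U, hU, rfl⟩ V' ⟨U', hU', rfl⟩ hne x hx y hy
    have hUU' : U ≠ U' := by
      intro h
      exact hne (by rw [h])
    have hlt := famX_disjoint hR hNval U hU U' hU' hUU' (e x) hx (e y) hy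
    exact dist_T_lt e hd x y hlt
  · intro x
    obtain ⟨i, U, hU, hmem⟩ := famX_cover hN (e x)
    exact ⟨i, e ⁻¹' U, ⟨U, hU, rfl⟩, hmem⟩

lemma not_asdimLE_T_zero (T : Type*) [MetricSpace T] (e : T ≃ Xtree)
    (hd : ∀ p q : T, ENNReal.ofReal (dist p q) = treePathDist (e p) (e q)) :
    ¬ ASDimLE T 0 := by
  intro h0
  obtain ⟨𝒰, hb, hdisj, hcov⟩ := h0 1 one_pos
  obtain ⟨S, hS⟩ := hb 0
  have hmemA : ∀ x : ℝ, 0 ≤ x → cw (1 + x) 1 ∈ Xtree := by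
    intro x hx
    apply mem_Xtree_A (k := 1) (le_refl 1)
    · rw [cw_im]
      norm_num
    · rw [cw_re]
      push_cast
      linarith
  set zpt : ℕ → Xtree := fun nn => ⟨cw (1 + (nn:ℝ)/2) 1, hmemA ((nn:ℝ)/2) (by positivity)⟩
    with hzpt
  set pt : ℕ → T := fun nn => e.symm (zpt nn) with hpt
  have hept : ∀ nn, e (pt nn) = zpt nn := fun nn => e.apply_symm_apply _
  have hstep : ∀ nn : ℕ, dist (pt nn) (pt (nn+1)) ≤ 1/2 := by
    intro nn
    apply dist_T_le e hd _ _ (by norm_num)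
    rw [hept, hept]
    have hmem : ∀ t : ℝ, 0 ≤ t → t ≤ 1 →
        (1-t) • ((zpt nn : Xtree) : ℂ) + t • ((zpt (nn+1) : Xtree) : ℂ) ∈ Xtree := by
      intro t h0 h1
      have hv : ((zpt nn : Xtree) : ℂ) = cw (1 + (nn:ℝ)/2) 1 := rfl
      have hv' : ((zpt (nn+1) : Xtree) : ℂ) = cw (1 + ((nn+1:ℕ):ℝ)/2) 1 := rfl
      rw [hv, hv', lerp_cw]
      apply mem_Xtree_A (k := 1) (le_refl 1)
      · rw [cw_im]
        push_cast
        ring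
      · rw [cw_re]
        push_cast
        nlinarith [mul_nonneg (by linarith : (0:ℝ) ≤ 1 - t) (by positivity : (0:ℝ) ≤ (nn:ℝ)/2),
          mul_nonneg h0 (by positivity : (0:ℝ) ≤ ((nn:ℝ)+1)/2)]
    refine le_trans (treePathDist_le_dist _ _ hmem) (ENNReal.ofReal_le_ofReal ?_)
    refine le_trans (complex_dist_le _ _) ?_
    have hv : ((zpt nn : Xtree) : ℂ) = cw (1 + (nn:ℝ)/2) 1 := rfl
    have hv' : ((zpt (nn+1) : Xtree) : ℂ) = cw (1 + ((nn+1:ℕ):ℝ)/2) 1 := rfl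
    rw [hv, hv', cw_re, cw_re, cw_im, cw_im]
    have he : (1 + (nn:ℝ)/2) - (1 + ((nn+1:ℕ):ℝ)/2) = -(1/2) := by
      push_cast
      ring
    rw [he, abs_neg, sub_self, abs_zero, abs_of_nonneg (by norm_num : (0:ℝ) ≤ 1/2)]
    norm_num
  have hlow : ∀ nn : ℕ, (nn:ℝ)/2 ≤ dist (pt 0) (pt nn) := by
    intro nn
    have h1 : ENNReal.ofReal (dist ((zpt 0 : Xtree):ℂ) ((zpt nn : Xtree):ℂ))
        ≤ ENNReal.ofReal (dist (pt 0) (pt nn)) := by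
      rw [hd (pt 0) (pt nn), hept, hept]
      exact ofReal_dist_le_treePathDist _ _
    have h2 : dist ((zpt 0 : Xtree):ℂ) ((zpt nn : Xtree):ℂ) ≤ dist (pt 0) (pt nn) :=
      (ENNReal.ofReal_le_ofReal_iff dist_nonneg).mp h1
    have h3 := complex_re_dist_le ((zpt 0 : Xtree):ℂ) ((zpt nn : Xtree):ℂ)
    have hv : ((zpt 0 : Xtree) : ℂ).re = 1 + ((0:ℕ):ℝ)/2 := rfl
    have hv' : ((zpt nn : Xtree) : ℂ).re = 1 + (nn:ℝ)/2 := rfl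
    rw [hv, hv'] at h3
    have he : (1 + ((0:ℕ):ℝ)/2) - (1 + (nn:ℝ)/2) = -((nn:ℝ)/2) := by
      push_cast
      ring
    rw [he, abs_neg, abs_of_nonneg (by positivity)] at h3
    exact le_trans h3 h2
  have hA : ∀ U, U ∈ 𝒰 0 → pt 0 ∈ U → ∀ nn : ℕ, pt nn ∈ U := by
    intro U hU h0 nn
    induction nn with
    | zero => exact h0
    | succ k ih =>
      obtain ⟨i, V, hV, hmem⟩ := hcov (pt (k+1))
      have hi0 : i = 0 := Subsingleton.elim (α := Fin 1) i 0
      rw [hi0] at hV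
      by_cases hUV : V = U
      · rw [hUV] at hmem
        exact hmem
      · exfalso
        have hgt := hdisj 0 U hU V hV (fun hh => hUV hh.symm) (pt k) ih (pt (k+1)) hmem
        have hle := hstep k
        linarith
  obtain ⟨i0, U, hU, h0⟩ := hcov (pt 0)
  have hi0 : i0 = 0 := Subsingleton.elim (α := Fin 1) i0 0
  rw [hi0] at hU
  have hSb := hS U hU (pt 0) h0 (pt (2*⌈S⌉₊ + 4)) (hA U hU h0 (2*⌈S⌉₊ + 4))
  have hlo := hlow (2*⌈S⌉₊ + 4)
  have hceil : S ≤ (⌈S⌉₊:ℝ) := Nat.le_ceil S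
  have hval : ((2*⌈S⌉₊ + 4 : ℕ):ℝ)/2 = (⌈S⌉₊:ℝ) + 2 := by
    push_cast
    ring
  rw [hval] at hlo
  linarith

/-- The tree `X` has asymptotic dimension `1` in the path
metric `d` (realized as `T` via `e : T ≃ X`), and asymptotic dimension `2` in
the Euclidean metric `d_e`. -/
theorem tree_asdim_path_eq_one_euclidean_eq_two (T : Type*) [MetricSpace T]
    (e : T ≃ Xtree)
    (hd : ∀ p q : T, ENNReal.ofReal (dist p q) = treePathDist (e p) (e q)) :
    asdim T = 1 ∧ asdim Xtree = 2 := by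
  constructor
  · have : asdim T = (1 : ℕ) := by
      refine asdim_eq_of 1 (asdimLE_T_one T e hd) ?_
      intro k hk
      rcases Nat.eq_zero_or_pos k with rfl | hps
      · exact absurd hk (not_asdimLE_T_zero T e hd)
      · exact hps
    simpa using this
  · have : asdim Xtree = (2 : ℕ) := by
      refine asdim_eq_of 2 asdimLE_Xtree_two ?_
      intro k hk
      by_contra hlt
      push_neg at hlt
      exact not_asdimLE_Xtree_one (ASDimLE_mono hk (by omega))
    simpa using this
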